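/- arXiv:1610.04099 — 6 statements merged into one kernel-verified Lean document; each statement's English description precedes it below -/
import Mathlib

section
/- Suppose f, g ∈ Homeo⁺(ℝ) satisfy supp f = (x, z) and supp g = (y, w) for some −∞ ≤ x < y < z < w ≤ ∞, that f(t) ≥ t and g(t) ≥ t for all t ∈ ℝ, and that g(f(y)) ≥ z. Then the subgroup ⟨f, g⟩ of Homeo⁺(ℝ) is isomorphic to Thompson's group F. -/
/-- The group of orientation-preserving homeomorphisms of `ℝ`,
realized as order-automorphisms of `ℝ`. -/
abbrev HomeoR := ℝ ≃o ℝ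

/-- The support of a homeomorphism of `ℝ`. -/
def supp (f : HomeoR) : Set ℝ := {x : ℝ | f x ≠ x}

/-- The support of a subgroup of `Homeo⁺(ℝ)`. -/
def suppG (G : Subgroup HomeoR) : Set ℝ := ⋃ g ∈ G, supp g

/-- The open interval in `ℝ` with `EReal` endpoints. -/
def eIoo (a b : EReal) : Set ℝ := {t : ℝ | a < (t : EReal) ∧ (t : EReal) < b}

/-- `a b : Fin n → EReal` are the endpoints of an `n`-chain of intervals. -/
def IsChainOfIntervals {n : ℕ} (a b : Fin n → EReal) : Prop :=
  (∀ i, a i < b i) ∧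
  (∀ (i : ℕ) (h : i + 1 < n),
      a ⟨i, by omega⟩ < a ⟨i + 1, h⟩ ∧ a ⟨i + 1, h⟩ < b ⟨i, by omega⟩ ∧
      b ⟨i, by omega⟩ < b ⟨i + 1, h⟩) ∧
  (∀ (i : ℕ) (h : i + 2 < n), b ⟨i, by omega⟩ ≤ a ⟨i + 2, h⟩)

/-- `f : Fin n → HomeoR` is a family of generators of an `n`-prechain group. -/
def IsPrechainGens {n : ℕ} (f : Fin n → HomeoR) : Prop :=
  2 ≤ n ∧
  ∃ a b : Fin n → EReal, IsChainOfIntervals a b ∧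
    (∀ i, supp (f i) = eIoo (a i) (b i)) ∧
    (∀ i, ∀ t : ℝ, t ≤ f i t)

open scoped commutatorElement in
/-- The relators of Thompson's group `F`: `[b⁻¹a, aba⁻¹]` and `[b⁻¹a, a²ba⁻²]`. -/
def thompsonFRels : Set (FreeGroup (Fin 2)) :=
  letI a : FreeGroup (Fin 2) := FreeGroup.of 0
  letI b : FreeGroup (Fin 2) := FreeGroup.of 1
  {⁅b⁻¹ * a, a * b * a⁻¹⁆, ⁅b⁻¹ * a, a ^ 2 * b * a⁻¹ ^ 2⁆}

/-- Thompson's group `F`. -/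
def ThompsonF : Type := PresentedGroup thompsonFRels

instance : Group ThompsonF := by unfold ThompsonF; infer_instance

/-- The relators of the Higman–Thompson group `Fₙ`:
`gᵢ⁻¹ gⱼ gᵢ g_{j+n-1}⁻¹` for `i < j`. -/
def higmanThompsonRels (n : ℕ) : Set (FreeGroup ℕ) :=
  {r | ∃ i j : ℕ, i < j ∧
      r = (FreeGroup.of i)⁻¹ * FreeGroup.of j * FreeGroup.of i *
        (FreeGroup.of (j + n - 1))⁻¹}

/-- The Higman–Thompson group `Fₙ`. -/
def HigmanThompsonF (n : ℕ) : Type := PresentedGroup (higmanThompsonRels n)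

instance (n : ℕ) : Group (HigmanThompsonF n) := by unfold HigmanThompsonF; infer_instance

/-- `f : Fin n → HomeoR` is a family of generators of an `n`-chain group:
a prechain family such that each pair of consecutive generators generates a copy of
Thompson's group `F`. -/
def IsChainGens {n : ℕ} (f : Fin n → HomeoR) : Prop :=
  IsPrechainGens f ∧
  ∀ (i : ℕ) (h : i + 1 < n),
    Nonempty ((Subgroup.closure {f ⟨i, by omega⟩, f ⟨i + 1, h⟩} : Subgroup HomeoR) ≃* ThompsonF)

/-- A subgroup of `Homeo⁺(ℝ)` is an `n`-chain group if it is generated by an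
`n`-family of chain group generators. -/
def IsChainGroup (n : ℕ) (G : Subgroup HomeoR) : Prop :=
  ∃ f : Fin n → HomeoR, IsChainGens f ∧ G = Subgroup.closure (Set.range f)

/-- The orbit of a point under a subgroup of `Homeo⁺(ℝ)`. -/
def orbitG (G : Subgroup HomeoR) (x : ℝ) : Set ℝ := {y : ℝ | ∃ g ∈ G, g x = y}

namespace ChainAux

open scoped commutatorElement


lemma mul_apply (p q : HomeoR) (t : ℝ) : (p * q) t = p (q t) := rfl
lemma one_apply (t : ℝ) : (1 : HomeoR) t = t := rfl

lemma homeo_ext {p q : HomeoR} (h : ∀ t, p t = q t) : p = q := by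
  ext t; exact h t

lemma fix_of_not_mem_supp {p : HomeoR} {t : ℝ} (h : t ∉ supp p) : p t = t := not_not.1 h

lemma inv_fix {p : HomeoR} {t : ℝ} (h : p t = t) : p⁻¹ t = t := by
  conv_lhs => rw [← h]
  exact p.symm_apply_apply t

lemma inv_apply (p : HomeoR) (t : ℝ) : p⁻¹ t = p.symm t := rfl

lemma apply_inv_apply (p : HomeoR) (t : ℝ) : p (p⁻¹ t) = t := p.apply_symm_apply t
lemma inv_apply_apply (p : HomeoR) (t : ℝ) : p⁻¹ (p t) = t := p.symm_apply_apply t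

lemma mem_supp_apply {p : HomeoR} {t : ℝ} (h : t ∈ supp p) : p t ∈ supp p := by
  intro h'
  exact h (p.injective h')

lemma commute_of_disjoint {p q : HomeoR} (h : Disjoint (supp p) (supp q)) :
    Commute p q := by
  have key : ∀ t : ℝ, p (q t) = q (p t) := by
    intro t
    by_cases hp : t ∈ supp p
    · have hq : t ∉ supp q := fun hq => (Set.disjoint_left.1 h hp) hq
      have hq' : p t ∉ supp q := fun hq => (Set.disjoint_left.1 h (mem_supp_apply hp)) hq
      rw [fix_of_not_mem_supp hq, fix_of_not_mem_supp hq']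
    · by_cases hq : t ∈ supp q
      · have hp' : q t ∉ supp p := fun hh => (Set.disjoint_right.1 h (mem_supp_apply hq)) hh
        rw [fix_of_not_mem_supp hp, fix_of_not_mem_supp hp']
      · simp [fix_of_not_mem_supp hp, fix_of_not_mem_supp hq]
  exact homeo_ext fun t => key t

lemma supp_conj (p q : HomeoR) : supp (p * q * p⁻¹) = p '' supp q := by
  ext t
  constructor
  · intro h
    refine ⟨p⁻¹ t, ?_, apply_inv_apply p t⟩
    intro h'
    exact h (by simp only [mul_apply, h', apply_inv_apply])
  · rintro ⟨s, hs, rfl⟩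
    intro h'
    simp only [mul_apply, inv_apply_apply] at h'
    exact hs (p.injective h')

/-- A homeo that fixes everything at or above `w` maps `(c,w)` onto `(p c, w)`. -/
lemma image_eIoo_right (p : HomeoR) {w : EReal}
    (hfix : ∀ t : ℝ, w ≤ (t : EReal) → p t = t) (c : ℝ) :
    p '' eIoo (c : EReal) w = eIoo ((p c : ℝ) : EReal) w := by
  have hfix' : ∀ t : ℝ, w ≤ (t : EReal) → p⁻¹ t = t := fun t ht => inv_fix (hfix t ht)
  ext u
  constructor
  · rintro ⟨s, ⟨hs1, hs2⟩, rfl⟩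
    have hcs : c < s := by exact_mod_cast hs1
    refine ⟨by exact_mod_cast p.strictMono hcs, ?_⟩
    cases w with
    | bot => exact absurd hs2 (by simp)
    | top => exact lt_top_iff_ne_top.2 (by simp)
    | coe w' =>
      have : s < w' := by exact_mod_cast hs2
      have := p.strictMono this
      rw [hfix w' le_rfl] at this
      exact_mod_cast this
  · rintro ⟨h1, h2⟩
    refine ⟨p⁻¹ u, ⟨?_, ?_⟩, apply_inv_apply p u⟩
    · have : p c < u := by exact_mod_cast h1
      have := p⁻¹.strictMono this
      rw [show p⁻¹ (p c) = c from inv_apply_apply p c] at this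
      exact_mod_cast this
    · cases w with
      | bot => exact absurd h2 (by simp)
      | top => exact lt_top_iff_ne_top.2 (by simp)
      | coe w' =>
        have : u < w' := by exact_mod_cast h2
        have := p⁻¹.strictMono this
        rw [hfix' w' le_rfl] at this
        exact_mod_cast this

/-- A homeo that fixes everything at or below `x` maps `(x,d)` onto `(x, p d)`. -/
lemma image_eIoo_left (p : HomeoR) {x : EReal}
    (hfix : ∀ t : ℝ, (t : EReal) ≤ x → p t = t) (d : ℝ) :
    p '' eIoo x (d : EReal) = eIoo x ((p d : ℝ) : EReal) := by
  have hfix' : ∀ t : ℝ, (t : EReal) ≤ x → p⁻¹ t = t := fun t ht => inv_fix (hfix t ht)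
  ext u
  constructor
  · rintro ⟨s, ⟨hs1, hs2⟩, rfl⟩
    have hsd : s < d := by exact_mod_cast hs2
    refine ⟨?_, by exact_mod_cast p.strictMono hsd⟩
    cases x with
    | top => exact absurd hs1 (by simp)
    | bot => exact bot_lt_iff_ne_bot.2 (by simp)
    | coe x' =>
      have : x' < s := by exact_mod_cast hs1
      have := p.strictMono this
      rw [hfix x' le_rfl] at this
      exact_mod_cast this
  · rintro ⟨h1, h2⟩
    refine ⟨p⁻¹ u, ⟨?_, ?_⟩, apply_inv_apply p u⟩
    · cases x with
      | top => exact absurd h1 (by simp)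
      | bot => exact bot_lt_iff_ne_bot.2 (by simp)
      | coe x' =>
        have : x' < u := by exact_mod_cast h1
        have := p⁻¹.strictMono this
        rw [hfix' x' le_rfl] at this
        exact_mod_cast this
    · have : u < p d := by exact_mod_cast h2
      have := p⁻¹.strictMono this
      rw [show p⁻¹ (p d) = d from inv_apply_apply p d] at this
      exact_mod_cast this




section Main

variable {f g : HomeoR} {x w : EReal} {y z : ℝ}
  (hxy : x < (y : EReal)) (hyz : y < z) (hzw : (z : EReal) < w)
  (hsf : supp f = eIoo x (z : EReal)) (hsg : supp g = eIoo (y : EReal) w)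
  (hfmono : ∀ t : ℝ, t ≤ f t) (hgmono : ∀ t : ℝ, t ≤ g t)
  (hdyn : z ≤ g (f y))

include hsf in
lemma f_fix_le {t : ℝ} (h : (t : EReal) ≤ x) : f t = t := by
  apply fix_of_not_mem_supp; rw [hsf]; exact fun hc => absurd hc.1 (not_lt.2 h)

include hsf in
lemma f_fix_ge {t : ℝ} (h : z ≤ t) : f t = t := by
  apply fix_of_not_mem_supp; rw [hsf]
  exact fun hc => absurd hc.2 (not_lt.2 (by exact_mod_cast h))

include hsg in
lemma g_fix_le {t : ℝ} (h : t ≤ y) : g t = t := by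
  apply fix_of_not_mem_supp; rw [hsg]
  exact fun hc => absurd hc.1 (not_lt.2 (by exact_mod_cast h))

include hsg in
lemma g_fix_ge {t : ℝ} (h : w ≤ (t : EReal)) : g t = t := by
  apply fix_of_not_mem_supp; rw [hsg]; exact fun hc => absurd hc.2 (not_lt.2 h)

include hsf hsg hyz hzw in
lemma A_fix_ge {t : ℝ} (h : w ≤ (t : EReal)) : (f * g) t = t := by
  rw [mul_apply, g_fix_ge hsg h, f_fix_ge hsf ?_]
  have : (z : EReal) ≤ (t : EReal) := le_trans (le_of_lt hzw) h
  exact_mod_cast this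

include hxy hsf hsg in
lemma A_fix_le {t : ℝ} (h : (t : EReal) ≤ x) : (f * g) t = t := by
  have hty : t ≤ y := by
    have : (t : EReal) ≤ (y : EReal) := le_trans h (le_of_lt hxy)
    exact_mod_cast this
  rw [mul_apply, g_fix_le hsg hty, f_fix_le hsf h]

include hxy hyz hzw hsf hsg hfmono hgmono in
lemma suppA : supp (f * g) = eIoo x w := by
  ext t
  constructor
  · intro ht
    by_contra hc
    rcases not_and_or.1 hc with hc | hc
    · exact ht (A_fix_le hxy hsf hsg (not_lt.1 hc))
    · exact ht (A_fix_ge hyz hzw hsf hsg (not_lt.1 hc))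
  · rintro ⟨h1, h2⟩
    by_cases hy : y < t
    · -- g moves t strictly right, f can only increase
      have hgt : g t ≠ t := by
        rw [show (g t ≠ t) = (t ∈ supp g) from rfl, hsg]
        exact ⟨by exact_mod_cast hy, h2⟩
      have h1' : t < g t := lt_of_le_of_ne (hgmono t) (Ne.symm hgt)
      have : t < f (g t) := lt_of_lt_of_le h1' (hfmono (g t))
      exact fun hc => absurd hc (by rw [mul_apply]; exact ne_of_gt this)
    · have hty : t ≤ y := not_lt.1 hy
      have hft : f t ≠ t := by
        rw [show (f t ≠ t) = (t ∈ supp f) from rfl, hsf]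
        exact ⟨h1, by exact_mod_cast lt_of_le_of_lt hty hyz⟩
      intro hc
      rw [mul_apply, g_fix_le hsg hty] at hc
      exact hft hc

include hxy hsf hsg in
lemma suppU : supp (g⁻¹ * (f * g)) = eIoo x (((g⁻¹) z : ℝ) : EReal) := by
  have h1 : g⁻¹ * (f * g) = g⁻¹ * f * (g⁻¹)⁻¹ := by group
  rw [h1, supp_conj, hsf]
  apply image_eIoo_left
  intro t ht
  apply inv_fix
  apply g_fix_le hsg
  have : (t : EReal) ≤ (y : EReal) := le_trans ht (le_of_lt hxy)
  exact_mod_cast this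

include hyz hzw hsf hsg in
lemma suppV : supp ((f * g) * g * (f * g)⁻¹) = eIoo ((f y : ℝ) : EReal) w := by
  rw [supp_conj, hsg]
  have himg := image_eIoo_right (f * g) (w := w)
    (fun t ht => A_fix_ge hyz hzw hsf hsg ht) y
  rw [himg, mul_apply, g_fix_le hsg le_rfl]

include hyz hzw hsf hsg in
lemma suppW : supp ((f * g) * ((f * g) * g * (f * g)⁻¹) * (f * g)⁻¹) =
    eIoo (((f * g) (f y) : ℝ) : EReal) w := by
  rw [supp_conj, suppV hyz hzw hsf hsg]
  exact image_eIoo_right (f * g) (fun t ht => A_fix_ge hyz hzw hsf hsg ht) (f y)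

include hdyn in
lemma g_inv_z_le : (g⁻¹) z ≤ f y := by
  have := g⁻¹.monotone hdyn
  rwa [inv_apply_apply] at this

lemma disj_aux {c d : ℝ} (h : c ≤ d) (xx ww : EReal) :
    Disjoint (eIoo xx ((c : ℝ) : EReal)) (eIoo ((d : ℝ) : EReal) ww) := by
  rw [Set.disjoint_left]
  rintro t ⟨_, h2⟩ ⟨h3, _⟩
  have hc : t < c := by exact_mod_cast h2
  have hd : d < t := by exact_mod_cast h3
  exact absurd (lt_of_le_of_lt h (lt_trans hd hc)) (lt_irrefl c)

include hxy hyz hzw hsf hsg hdyn in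
lemma comm1 : Commute (g⁻¹ * (f * g)) ((f * g) * g * (f * g)⁻¹) := by
  apply commute_of_disjoint
  rw [suppU hxy hsf hsg, suppV hyz hzw hsf hsg]
  exact disj_aux (g_inv_z_le hdyn) x w

include hxy hyz hzw hsf hsg hfmono hgmono hdyn in
lemma comm2 : Commute (g⁻¹ * (f * g))
    ((f * g) * ((f * g) * g * (f * g)⁻¹) * (f * g)⁻¹) := by
  apply commute_of_disjoint
  rw [suppU hxy hsf hsg, suppW hyz hzw hsf hsg]
  apply disj_aux ?_ x w
  calc (g⁻¹) z ≤ f y := g_inv_z_le hdyn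
    _ ≤ g (f y) := hgmono _
    _ ≤ f (g (f y)) := hfmono _
    _ = (f * g) (f y) := rfl

end Main



def aT : ThompsonF := PresentedGroup.of 0
def bT : ThompsonF := PresentedGroup.of 1

lemma relator_one {r : FreeGroup (Fin 2)} (hr : r ∈ thompsonFRels) :
    (PresentedGroup.mk thompsonFRels r : ThompsonF) = 1 := by
  apply (QuotientGroup.eq_one_iff _).2
  exact Subgroup.subset_normalClosure hr

lemma rel1' : (⁅bT⁻¹ * aT, aT * bT * aT⁻¹⁆ : ThompsonF) = 1 := by
  have h := relator_one (r := ⁅(FreeGroup.of 1 : FreeGroup (Fin 2))⁻¹ * FreeGroup.of 0,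
    FreeGroup.of 0 * FreeGroup.of 1 * (FreeGroup.of 0)⁻¹⁆) (by left; rfl)
  rw [show (⁅bT⁻¹ * aT, aT * bT * aT⁻¹⁆ : ThompsonF) = PresentedGroup.mk thompsonFRels
    ⁅(FreeGroup.of 1 : FreeGroup (Fin 2))⁻¹ * FreeGroup.of 0,
      FreeGroup.of 0 * FreeGroup.of 1 * (FreeGroup.of 0)⁻¹⁆ from by
    simp [aT, bT, PresentedGroup.of, map_commutatorElement]; rfl]
  exact h

lemma rel2' : (⁅bT⁻¹ * aT, aT ^ 2 * bT * aT⁻¹ ^ 2⁆ : ThompsonF) = 1 := by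
  have h := relator_one (r := ⁅(FreeGroup.of 1 : FreeGroup (Fin 2))⁻¹ * FreeGroup.of 0,
    FreeGroup.of 0 ^ 2 * FreeGroup.of 1 * (FreeGroup.of 0)⁻¹ ^ 2⁆) (by right; rfl)
  rw [show (⁅bT⁻¹ * aT, aT ^ 2 * bT * aT⁻¹ ^ 2⁆ : ThompsonF) = PresentedGroup.mk thompsonFRels
    ⁅(FreeGroup.of 1 : FreeGroup (Fin 2))⁻¹ * FreeGroup.of 0,
      FreeGroup.of 0 ^ 2 * FreeGroup.of 1 * (FreeGroup.of 0)⁻¹ ^ 2⁆ from by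
    simp only [map_commutatorElement, map_mul, map_inv, map_pow]; rfl]
  exact h


def xF : ℕ → ThompsonF
  | 0 => aT
  | 1 => bT
  | (n+2) => aT * xF (n+1) * aT⁻¹

lemma xF_succ (n : ℕ) (h : 1 ≤ n) : xF (n+1) = aT * xF n * aT⁻¹ := by
  match n, h with
  | (m+1), _ => rfl

/-- from ⁅b⁻¹a, v⁆ = 1 conclude b v b⁻¹ = a v a⁻¹ -/
lemma conj_eq_of_comm {G : Type*} [Group G] {a b v : G}
    (h : ⁅b⁻¹ * a, v⁆ = 1) : b * v * b⁻¹ = a * v * a⁻¹ := by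
  have hc : (b⁻¹ * a) * v = v * (b⁻¹ * a) :=
    (commutatorElement_eq_one_iff_mul_comm.1 h)
  calc b * v * b⁻¹ = b * (v * (b⁻¹ * a)) * a⁻¹ := by group
    _ = b * ((b⁻¹ * a) * v) * a⁻¹ := by rw [← hc]
    _ = a * v * a⁻¹ := by group

lemma rel1 : bT * xF 2 * bT⁻¹ = xF 3 := by
  have h := conj_eq_of_comm rel1'
  rw [show xF 2 = aT * bT * aT⁻¹ from rfl]
  rw [h]; rfl

lemma rel2 : bT * xF 3 * bT⁻¹ = xF 4 := by
  have h := conj_eq_of_comm rel2'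
  have h3 : xF 3 = aT ^ 2 * bT * aT⁻¹ ^ 2 := by
    show aT * (aT * bT * aT⁻¹) * aT⁻¹ = _
    rw [sq, sq]
    group
  rw [h3, h, ← h3, xF_succ 3 (by norm_num)]

lemma REL : ∀ n k : ℕ, k < n → xF k * xF n * (xF k)⁻¹ = xF (n+1) := by
  intro n
  induction n using Nat.strong_induction_on with
  | _ n IH =>
    intro k hk
    have h0 : ∀ m : ℕ, 1 ≤ m → xF 0 * xF m * (xF 0)⁻¹ = xF (m+1) := by
      intro m hm
      rw [xF_succ m hm]; rfl
    -- case k ≥ 2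
    have hk2 : ∀ j : ℕ, j + 2 < n → xF (j+2) * xF n * (xF (j+2))⁻¹ = xF (n+1) := by
      intro j hj
      obtain ⟨m, rfl⟩ : ∃ m, n = m + 1 := ⟨n - 1, by omega⟩
      have hm1 : 1 ≤ m := by omega
      rw [xF_succ m hm1, show xF (j+2) = aT * xF (j+1) * aT⁻¹ from rfl]
      have hIH : xF (j+1) * xF m * (xF (j+1))⁻¹ = xF (m+1) := IH m (by omega) (j+1) (by omega)
      calc aT * xF (j+1) * aT⁻¹ * (aT * xF m * aT⁻¹) * (aT * xF (j+1) * aT⁻¹)⁻¹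
          = aT * (xF (j+1) * xF m * (xF (j+1))⁻¹) * aT⁻¹ := by group
        _ = aT * xF (m+1) * aT⁻¹ := by rw [hIH]
        _ = xF (m+1+1) := (xF_succ (m+1) (by omega)).symm
    match k, hk with
    | 0, hk => exact h0 n (by omega)
    | (j+2), hk => exact hk2 j hk
    | 1, hk =>
      -- n ≥ 2
      match n, hk with
      | 2, _ => exact rel1
      | 3, _ => exact rel2
      | (m+4), _ =>
        have hxn : xF 2 * xF (m+3) * (xF 2)⁻¹ = xF (m+4) := IH (m+3) (by omega) 2 (by omega)
        have h1 : xF 1 * xF (m+3) * (xF 1)⁻¹ = xF (m+4) := IH (m+3) (by omega) 1 (by omega)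
        have h12 : xF 1 * xF 2 * (xF 1)⁻¹ = xF 3 := rel1
        have h3 : xF 3 * xF (m+4) * (xF 3)⁻¹ = xF (m+5) := hk2 1 (by omega)
        calc xF 1 * xF (m+4) * (xF 1)⁻¹
            = xF 1 * (xF 2 * xF (m+3) * (xF 2)⁻¹) * (xF 1)⁻¹ := by rw [hxn]
          _ = (xF 1 * xF 2 * (xF 1)⁻¹) * (xF 1 * xF (m+3) * (xF 1)⁻¹) *
              (xF 1 * xF 2 * (xF 1)⁻¹)⁻¹ := by group
          _ = xF 3 * xF (m+4) * (xF 3)⁻¹ := by rw [h12, h1]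
          _ = xF (m+5) := h3

lemma R1 {k n : ℕ} (h : k < n) : xF k * xF n = xF (n+1) * xF k := by
  have := REL n k h
  calc xF k * xF n = (xF k * xF n * (xF k)⁻¹) * xF k := by group
    _ = xF (n+1) * xF k := by rw [this]

lemma R2 {k n : ℕ} (h : k < n) : xF n * (xF k)⁻¹ = (xF k)⁻¹ * xF (n+1) := by
  have := R1 h
  calc xF n * (xF k)⁻¹ = (xF k)⁻¹ * (xF k * xF n) * (xF k)⁻¹ := by group
    _ = (xF k)⁻¹ * (xF (n+1) * xF k) * (xF k)⁻¹ := by rw [this]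
    _ = (xF k)⁻¹ * xF (n+1) := by group

lemma R3 {k n : ℕ} (h : k < n) : xF k * (xF n)⁻¹ = (xF (n+1))⁻¹ * xF k := by
  have := R1 h
  calc xF k * (xF n)⁻¹ = (xF (n+1))⁻¹ * (xF (n+1) * xF k) * (xF n)⁻¹ := by group
    _ = (xF (n+1))⁻¹ * (xF k * xF n) * (xF n)⁻¹ := by rw [← this]
    _ = (xF (n+1))⁻¹ * xF k := by group


/-- the positive monoid -/
def MT : Submonoid ThompsonF := Submonoid.closure (Set.range xF)

def evalR : List ℕ → ThompsonF
  | [] => 1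
  | (i :: l) => evalR l * xF i

def ins (a : ℕ) : List ℕ → List ℕ
  | [] => [a]
  | (b :: l) => if a ≤ b then a :: b :: l else b :: ins (a+1) l

lemma ins_lb : ∀ (l : List ℕ) (a c : ℕ), c ≤ a → (∀ j ∈ l, c ≤ j) →
    ∀ j ∈ ins a l, c ≤ j := by
  intro l
  induction l with
  | nil => intro a c hca _ j hj; simp [ins] at hj; omega
  | cons b l IH =>
    intro a c hca hl j hj
    rw [ins] at hj
    by_cases hab : a ≤ b
    · rw [if_pos hab] at hj
      rcases List.mem_cons.1 hj with rfl | hj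
      · exact hca
      · exact hl j hj
    · rw [if_neg hab] at hj
      rcases List.mem_cons.1 hj with rfl | hj
      · exact hl j (by simp)
      · exact IH (a+1) c (by omega) (fun i hi => hl i (by simp [hi])) j hj

lemma ins_sorted : ∀ (l : List ℕ) (a : ℕ), l.Pairwise (· ≤ ·) →
    (ins a l).Pairwise (· ≤ ·) := by
  intro l
  induction l with
  | nil => intro a _; simp [ins]
  | cons b l IH =>
    intro a hl
    rw [List.pairwise_cons] at hl
    rw [ins]
    by_cases hab : a ≤ b
    · rw [if_pos hab, List.pairwise_cons]
      constructor
      · intro j hj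
        rcases List.mem_cons.1 hj with rfl | hj
        · exact hab
        · exact le_trans hab (hl.1 j hj)
      · rw [List.pairwise_cons]; exact hl
    · rw [if_neg hab, List.pairwise_cons]
      refine ⟨?_, IH (a+1) hl.2⟩
      intro j hj
      exact ins_lb l (a+1) b (by omega) hl.1 j hj

lemma evalR_ins : ∀ (l : List ℕ) (a : ℕ), l.Pairwise (· ≤ ·) →
    evalR (ins a l) = evalR l * xF a := by
  intro l
  induction l with
  | nil => intro a _; simp [ins, evalR]
  | cons b l IH =>
    intro a hl
    rw [List.pairwise_cons] at hl
    rw [ins]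
    by_cases hab : a ≤ b
    · rw [if_pos hab]; rfl
    · rw [if_neg hab]
      have hba : b < a := by omega
      show evalR (ins (a+1) l) * xF b = (evalR l * xF b) * xF a
      rw [IH (a+1) hl.2, mul_assoc, mul_assoc, ← R1 hba]

lemma evalR_mem : ∀ l : List ℕ, evalR l ∈ MT := by
  intro l
  induction l with
  | nil => exact Submonoid.one_mem _
  | cons i l IH =>
    exact Submonoid.mul_mem _ IH (Submonoid.subset_closure ⟨i, rfl⟩)

lemma sorted_mul : ∀ (l₂ l₁ : List ℕ), l₁.Pairwise (· ≤ ·) →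
    ∃ l₃ : List ℕ, l₃.Pairwise (· ≤ ·) ∧ evalR l₁ * evalR l₂ = evalR l₃ := by
  intro l₂
  induction l₂ with
  | nil => intro l₁ h; exact ⟨l₁, h, by simp [evalR]⟩
  | cons i l₂ IH =>
    intro l₁ h
    obtain ⟨l₃, h₃, e₃⟩ := IH l₁ h
    refine ⟨ins i l₃, ins_sorted _ _ h₃, ?_⟩
    rw [evalR_ins _ _ h₃, ← e₃]
    show evalR l₁ * (evalR l₂ * xF i) = _
    rw [← mul_assoc]

lemma sorted_rep : ∀ p ∈ MT, ∃ l : List ℕ, l.Pairwise (· ≤ ·) ∧ p = evalR l := by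
  intro p hp
  induction hp using Submonoid.closure_induction with
  | mem q hq =>
    obtain ⟨i, rfl⟩ := hq
    exact ⟨[i], by simp, by simp [evalR]⟩
  | one => exact ⟨[], by simp, by simp [evalR]⟩
  | mul p q _ _ hp hq =>
    obtain ⟨l₁, hs₁, rfl⟩ := hp
    obtain ⟨l₂, _, rfl⟩ := hq
    exact sorted_mul l₂ l₁ hs₁

lemma pushInv : ∀ q ∈ MT, ∀ i : ℕ,
    (q * (xF i)⁻¹ ∈ MT) ∨ (∃ c : ℕ, ∃ u ∈ MT, q * (xF i)⁻¹ = (xF c)⁻¹ * u) := by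
  intro q hq
  induction hq using Submonoid.closure_induction with
  | mem p hp =>
    obtain ⟨j, rfl⟩ := hp
    intro i
    rcases lt_trichotomy j i with hji | rfl | hij
    · right
      exact ⟨i+1, xF j, Submonoid.subset_closure ⟨j, rfl⟩, R3 hji⟩
    · left; simp [Submonoid.one_mem]
    · right
      exact ⟨i, xF (j+1), Submonoid.subset_closure ⟨j+1, rfl⟩, R2 hij⟩
  | one =>
    intro i
    right
    exact ⟨i, 1, Submonoid.one_mem _, by group⟩
  | mul p q hp hq IHp IHq =>
    intro i
    rcases IHq i with h | ⟨c, u, hu, hqu⟩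
    · left
      have : p * q * (xF i)⁻¹ = p * (q * (xF i)⁻¹) := by group
      rw [this]
      exact Submonoid.mul_mem _ hp h
    · have hstep : p * q * (xF i)⁻¹ = (p * (xF c)⁻¹) * u := by
        rw [mul_assoc, hqu]; group
      rcases IHp c with h | ⟨d, u₂, hu₂, hpu⟩
      · left; rw [hstep]; exact Submonoid.mul_mem _ h hu
      · right
        refine ⟨d, u₂ * u, Submonoid.mul_mem _ hu₂ hu, ?_⟩
        rw [hstep, hpu]; group

lemma pushInvWord : ∀ r ∈ MT, ∀ q ∈ MT,
    ∃ P ∈ MT, ∃ Q ∈ MT, q * r⁻¹ = P⁻¹ * Q := by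
  intro r hr
  induction hr using Submonoid.closure_induction with
  | mem p hp =>
    obtain ⟨i, rfl⟩ := hp
    intro q hq
    rcases pushInv q hq i with h | ⟨c, u, hu, hqu⟩
    · exact ⟨1, Submonoid.one_mem _, q * (xF i)⁻¹, h, by group⟩
    · exact ⟨xF c, Submonoid.subset_closure ⟨c, rfl⟩, u, hu, hqu⟩
  | one =>
    intro q hq
    exact ⟨1, Submonoid.one_mem _, q, hq, by group⟩
  | mul r₁ r₂ hr₁ hr₂ IH₁ IH₂ =>
    intro q hq
    obtain ⟨P₂, hP₂, Q₂, hQ₂, h₂⟩ := IH₂ q hq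
    obtain ⟨P₁, hP₁, Q₁, hQ₁, h₁⟩ := IH₁ Q₂ hQ₂
    refine ⟨P₁ * P₂, Submonoid.mul_mem _ hP₁ hP₂, Q₁, hQ₁, ?_⟩
    calc q * (r₁ * r₂)⁻¹ = (q * r₂⁻¹) * r₁⁻¹ := by group
      _ = P₂⁻¹ * (Q₂ * r₁⁻¹) := by rw [h₂]; group
      _ = P₂⁻¹ * (P₁⁻¹ * Q₁) := by rw [h₁]
      _ = (P₁ * P₂)⁻¹ * Q₁ := by group

lemma top_gen : Subgroup.closure ({aT, bT} : Set ThompsonF) = ⊤ := by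
  refine eq_top_iff.2 (le_trans (PresentedGroup.closure_range_of (rels := thompsonFRels)).ge ?_)
  apply Subgroup.closure_le _ |>.2
  rintro p ⟨i, rfl⟩
  fin_cases i
  · exact Subgroup.subset_closure (by left; rfl)
  · exact Subgroup.subset_closure (by right; rfl)

lemma decomp : ∀ e : ThompsonF, ∃ p ∈ MT, ∃ q ∈ MT, e = p⁻¹ * q := by
  intro e
  have he : e ∈ Subgroup.closure ({aT, bT} : Set ThompsonF) := by
    rw [top_gen]; trivial
  induction he using Subgroup.closure_induction with
  | mem p hp =>
    rcases hp with rfl | rfl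
    · exact ⟨1, Submonoid.one_mem _, xF 0, Submonoid.subset_closure ⟨0, rfl⟩,
        by rw [show xF 0 = aT from rfl]; group⟩
    · exact ⟨1, Submonoid.one_mem _, xF 1, Submonoid.subset_closure ⟨1, rfl⟩,
        by rw [show xF 1 = bT from rfl]; group⟩
  | one => exact ⟨1, Submonoid.one_mem _, 1, Submonoid.one_mem _, by group⟩
  | mul e₁ e₂ _ _ IH₁ IH₂ =>
    obtain ⟨p₁, hp₁, q₁, hq₁, rfl⟩ := IH₁
    obtain ⟨p₂, hp₂, q₂, hq₂, rfl⟩ := IH₂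
    obtain ⟨P, hP, Q, hQ, hPQ⟩ := pushInvWord p₂ hp₂ q₁ hq₁
    refine ⟨P * p₁, Submonoid.mul_mem _ hP hp₁, Q * q₂, Submonoid.mul_mem _ hQ hq₂, ?_⟩
    calc p₁⁻¹ * q₁ * (p₂⁻¹ * q₂) = p₁⁻¹ * (q₁ * p₂⁻¹) * q₂ := by group
      _ = p₁⁻¹ * (P⁻¹ * Q) * q₂ := by rw [hPQ]
      _ = (P * p₁)⁻¹ * (Q * q₂) := by group
  | inv e _ IH =>
    obtain ⟨p, hp, q, hq, rfl⟩ := IH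
    exact ⟨q, hq, p, hp, by group⟩



/-- The images of the standard generators of `F`. -/
def Xh (A B : HomeoR) : ℕ → HomeoR
  | 0 => A
  | 1 => B
  | (n+2) => A * Xh A B (n+1) * A⁻¹

/-- iterates of the left endpoint -/
def rpt (A : HomeoR) (y : ℝ) : ℕ → ℝ
  | 0 => y
  | (n+1) => A (rpt A y n)

/-- endpoints of the supports -/
def sig (A : HomeoR) (x : EReal) (y : ℝ) : ℕ → EReal
  | 0 => x
  | (n+1) => ((rpt A y n : ℝ) : EReal)

def evalRH (A B : HomeoR) : List ℕ → HomeoR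
  | [] => 1
  | (i :: l) => evalRH A B l * Xh A B i

section Dyn

variable {A B : HomeoR} {x w : EReal} {y : ℝ}
  (hsA : supp A = eIoo x w) (hsB : supp B = eIoo (y : EReal) w)
  (hxy : x < (y : EReal)) (hyw : (y : EReal) < w)
  (hAmove : ∀ t : ℝ, t ≤ A t) (hBmove : ∀ t : ℝ, t ≤ B t)

include hsA hxy hyw in
lemma rpt_mem_supp : ∀ n, rpt A y n ∈ supp A := by
  intro n
  induction n with
  | zero => rw [show rpt A y 0 = y from rfl, hsA]; exact ⟨hxy, hyw⟩
  | succ n IH => exact mem_supp_apply IH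

include hsA hxy hyw hAmove in
lemma rpt_strict : ∀ n, rpt A y n < rpt A y (n+1) := by
  intro n
  exact lt_of_le_of_ne (hAmove _) (Ne.symm (rpt_mem_supp hsA hxy hyw n))

include hsA hxy hyw hAmove in
lemma sig_lt_succ : ∀ n, sig A x y n < sig A x y (n+1) := by
  intro n
  match n with
  | 0 => exact hxy
  | (m+1) =>
    show ((rpt A y m : ℝ) : EReal) < ((rpt A y (m+1) : ℝ) : EReal)
    exact_mod_cast rpt_strict hsA hxy hyw hAmove m

include hsA hxy hyw hAmove in
lemma sig_mono : ∀ {m n : ℕ}, m ≤ n → sig A x y m ≤ sig A x y n := by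
  intro m n h
  induction n with
  | zero => rw [Nat.le_zero.1 h]
  | succ n IH =>
    rcases Nat.lt_or_ge m (n+1) with h' | h'
    · exact le_trans (IH (by omega)) (le_of_lt (sig_lt_succ hsA hxy hyw hAmove n))
    · rw [show m = n+1 by omega]

include hsA hxy hyw in
lemma sig_lt_w : ∀ n, sig A x y n < w := by
  intro n
  match n with
  | 0 => exact lt_trans hxy hyw
  | (m+1) =>
    have := rpt_mem_supp hsA hxy hyw m
    rw [hsA] at this
    exact this.2

include hsA in
lemma A_fix_ge_w : ∀ t : ℝ, w ≤ (t : EReal) → A t = t := by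
  intro t ht
  apply fix_of_not_mem_supp
  rw [hsA]
  exact fun hc => absurd hc.2 (not_lt.2 ht)

include hsA hsB hxy hyw in
lemma supp_Xh : ∀ n, supp (Xh A B n) = eIoo (sig A x y n) w := by
  intro n
  induction n using Nat.strong_induction_on with
  | _ n IH =>
    match n with
    | 0 => exact hsA
    | 1 => exact hsB
    | (m+2) =>
      show supp (A * Xh A B (m+1) * A⁻¹) = _
      rw [supp_conj, IH (m+1) (by omega)]
      match m with
      | 0 =>
        show A '' eIoo ((y:ℝ) : EReal) w = eIoo ((rpt A y 1 : ℝ) : EReal) w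
        rw [image_eIoo_right A (A_fix_ge_w hsA) y]
        rfl
      | (k+1) =>
        show A '' eIoo ((rpt A y (k+1) : ℝ) : EReal) w = eIoo ((rpt A y (k+2) : ℝ) : EReal) w
        rw [image_eIoo_right A (A_fix_ge_w hsA) (rpt A y (k+1))]
        rfl

include hAmove hBmove in
lemma Xh_move : ∀ n, ∀ t : ℝ, t ≤ Xh A B n t := by
  intro n
  induction n using Nat.strong_induction_on with
  | _ n IH =>
    match n with
    | 0 => exact hAmove
    | 1 => exact hBmove
    | (m+2) =>
      intro t
      show t ≤ (A * Xh A B (m+1) * A⁻¹) t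
      rw [mul_apply, mul_apply]
      calc t = A (A⁻¹ t) := (A.apply_symm_apply t).symm
        _ ≤ A (Xh A B (m+1) (A⁻¹ t)) := A.monotone (IH (m+1) (by omega) _)

include hAmove hBmove in
lemma evalRH_move : ∀ l : List ℕ, ∀ t : ℝ, t ≤ evalRH A B l t := by
  intro l
  induction l with
  | nil => intro t; exact le_refl t
  | cons i l IH =>
    intro t
    show t ≤ evalRH A B l (Xh A B i t)
    exact le_trans (Xh_move hAmove hBmove i t) (IH _)

include hsA hsB hxy hyw hAmove in
lemma evalRH_fix {c : ℕ} : ∀ (l : List ℕ), (∀ j ∈ l, c ≤ j) → ∀ t : ℝ,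
    (t : EReal) ≤ sig A x y c → evalRH A B l t = t := by
  intro l
  induction l with
  | nil => intro _ t _; rfl
  | cons i l IH =>
    intro hall t ht
    show evalRH A B l (Xh A B i t) = t
    have hXi : Xh A B i t = t := by
      apply fix_of_not_mem_supp
      rw [supp_Xh hsA hsB hxy hyw]
      rintro ⟨h1, _⟩
      exact absurd (lt_of_le_of_lt (le_trans ht
        (sig_mono hsA hxy hyw hAmove (hall i (by simp)))) h1) (lt_irrefl _)
    rw [hXi]
    exact IH (fun j hj => hall j (by simp [hj])) t ht

include hsA hsB hxy hyw hAmove hBmove in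
lemma sorted_inj : ∀ (N : ℕ) (l₁ l₂ : List ℕ), l₁.length + l₂.length ≤ N →
    l₁.Pairwise (· ≤ ·) → l₂.Pairwise (· ≤ ·) →
    evalRH A B l₁ = evalRH A B l₂ → l₁ = l₂ := by
  intro N
  induction N with
  | zero =>
    intro l₁ l₂ hlen _ _ _
    have h1 : l₁ = [] := List.length_eq_zero_iff.1 (by omega)
    have h2 : l₂ = [] := List.length_eq_zero_iff.1 (by omega)
    rw [h1, h2]
  | succ N IHN =>
    intro l₁ l₂ hlen hs₁ hs₂ heq
    -- helper: a sorted nonempty list moves some point that short lists with bigger letters fix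
    have key : ∀ (m : ℕ) (l : List ℕ) (t : ℝ), sig A x y m < (t : EReal) →
        (t : EReal) < sig A x y (m+1) → t < evalRH A B (m :: l) t := by
      intro m l t h1 h2
      have htsupp : t ∈ supp (Xh A B m) := by
        rw [supp_Xh hsA hsB hxy hyw]
        exact ⟨h1, lt_trans h2 (sig_lt_w hsA hxy hyw (m+1))⟩
      have hmove : t < Xh A B m t := lt_of_le_of_ne (Xh_move hAmove hBmove m t) (Ne.symm htsupp)
      calc t < Xh A B m t := hmove
        _ ≤ evalRH A B l (Xh A B m t) := evalRH_move hAmove hBmove l _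
        _ = evalRH A B (m :: l) t := rfl
    match l₁, l₂ with
    | [], [] => rfl
    | [], (m :: l₂') =>
      exfalso
      obtain ⟨t, ht1, ht2⟩ := EReal.lt_iff_exists_real_btwn.1 (sig_lt_succ hsA hxy hyw hAmove m)
      have := key m l₂' t ht1 ht2
      rw [← heq] at this
      exact absurd this (lt_irrefl t)
    | (m :: l₁'), [] =>
      exfalso
      obtain ⟨t, ht1, ht2⟩ := EReal.lt_iff_exists_real_btwn.1 (sig_lt_succ hsA hxy hyw hAmove m)
      have := key m l₁' t ht1 ht2
      rw [heq] at this
      exact absurd this (lt_irrefl t)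
    | (m₁ :: l₁'), (m₂ :: l₂') =>
      have hs₁' := (List.pairwise_cons.1 hs₁)
      have hs₂' := (List.pairwise_cons.1 hs₂)
      rcases lt_trichotomy m₁ m₂ with hm | rfl | hm
      · exfalso
        obtain ⟨t, ht1, ht2⟩ :=
          EReal.lt_iff_exists_real_btwn.1 (sig_lt_succ hsA hxy hyw hAmove m₁)
        have hl : t < evalRH A B (m₁ :: l₁') t := key m₁ l₁' t ht1 ht2
        have hr : evalRH A B (m₂ :: l₂') t = t := by
          apply evalRH_fix hsA hsB hxy hyw hAmove (c := m₂)
          · intro j hj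
            rcases List.mem_cons.1 hj with rfl | hj
            · exact le_refl j
            · exact hs₂'.1 j hj
          · exact le_trans (le_of_lt ht2) (sig_mono hsA hxy hyw hAmove (by omega))
        rw [heq, hr] at hl
        exact absurd hl (lt_irrefl t)
      · have hcan : evalRH A B l₁' = evalRH A B l₂' := by
          have : evalRH A B l₁' * Xh A B m₁ = evalRH A B l₂' * Xh A B m₁ := heq
          exact mul_right_cancel this
        have : l₁' = l₂' := by
          apply IHN l₁' l₂' ?_ hs₁'.2 hs₂'.2 hcan
          have := hlen
          simp only [List.length_cons] at this ⊢
          omega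
        rw [this]
      · exfalso
        obtain ⟨t, ht1, ht2⟩ :=
          EReal.lt_iff_exists_real_btwn.1 (sig_lt_succ hsA hxy hyw hAmove m₂)
        have hl : t < evalRH A B (m₂ :: l₂') t := key m₂ l₂' t ht1 ht2
        have hr : evalRH A B (m₁ :: l₁') t = t := by
          apply evalRH_fix hsA hsB hxy hyw hAmove (c := m₁)
          · intro j hj
            rcases List.mem_cons.1 hj with rfl | hj
            · exact le_refl j
            · exact hs₁'.1 j hj
          · exact le_trans (le_of_lt ht2) (sig_mono hsA hxy hyw hAmove (by omega))
        rw [← heq, hr] at hl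
        exact absurd hl (lt_irrefl t)

end Dyn

end ChainAux

/-- If `supp f = (x,z)`, `supp g = (y,w)` with `-∞ ≤ x < y < z < w ≤ ∞`,
both `f` and `g` move points to the right, and `g(f(y)) ≥ z`, then `⟨f,g⟩ ≅ F`. -/
theorem stmt1 (f g : HomeoR) (x w : EReal) (y z : ℝ)
    (hxy : x < (y : EReal)) (hyz : y < z) (hzw : (z : EReal) < w)
    (hsf : supp f = eIoo x (z : EReal)) (hsg : supp g = eIoo (y : EReal) w)
    (hfmono : ∀ t : ℝ, t ≤ f t) (hgmono : ∀ t : ℝ, t ≤ g t)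
    (hdyn : z ≤ g (f y)) :
    Nonempty ((Subgroup.closure {f, g} : Subgroup HomeoR) ≃* ThompsonF) := by
  open scoped commutatorElement in
  classical
  have hc1 := ChainAux.comm1 hxy hyz hzw hsf hsg hdyn
  have hc2 := ChainAux.comm2 hxy hyz hzw hsf hsg hfmono hgmono hdyn
  -- the relators map to 1
  have hrels : ∀ r ∈ thompsonFRels,
      FreeGroup.lift (![f * g, g] : Fin 2 → HomeoR) r = 1 := by
    intro r hr
    simp only [thompsonFRels, Set.mem_insert_iff, Set.mem_singleton_iff] at hr
    rcases hr with rfl | rfl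
    · rw [map_commutatorElement]
      simp only [map_mul, map_inv, FreeGroup.lift_apply_of, Matrix.cons_val_zero,
        Matrix.cons_val_one, Matrix.head_cons]
      exact commutatorElement_eq_one_iff_commute.2 hc1
    · rw [map_commutatorElement]
      simp only [map_mul, map_inv, map_pow, FreeGroup.lift_apply_of, Matrix.cons_val_zero,
        Matrix.cons_val_one, Matrix.head_cons]
      have hrw : (f * g) ^ 2 * g * ((f * g)⁻¹) ^ 2 =
          (f * g) * ((f * g) * g * (f * g)⁻¹) * (f * g)⁻¹ := by
        rw [sq, sq]; group
      rw [hrw]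
      exact commutatorElement_eq_one_iff_commute.2 hc2
  let φ : ThompsonF →* HomeoR := PresentedGroup.toGroup hrels
  have hφa : φ ChainAux.aT = f * g :=
    PresentedGroup.toGroup.of (h := hrels) (x := (0 : Fin 2))
  have hφb : φ ChainAux.bT = g :=
    PresentedGroup.toGroup.of (h := hrels) (x := (1 : Fin 2))
  have hφx : ∀ n, φ (ChainAux.xF n) = ChainAux.Xh (f * g) g n := by
    intro n
    induction n using Nat.strong_induction_on with
    | _ n IH =>
      match n with
      | 0 => exact hφa
      | 1 => exact hφb
      | (m+2) =>
        show φ (ChainAux.aT * ChainAux.xF (m+1) * ChainAux.aT⁻¹) = _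
        rw [map_mul, map_mul, map_inv, hφa, IH (m+1) (by omega)]
        rfl
  have hφeval : ∀ l : List ℕ, φ (ChainAux.evalR l) = ChainAux.evalRH (f * g) g l := by
    intro l
    induction l with
    | nil => exact map_one φ
    | cons i l IH =>
      show φ (ChainAux.evalR l * ChainAux.xF i) = ChainAux.evalRH (f * g) g l *
        ChainAux.Xh (f * g) g i
      rw [map_mul, IH, hφx]
  -- dynamical hypotheses
  have hsA : supp (f * g) = eIoo x w := ChainAux.suppA hxy hyz hzw hsf hsg hfmono hgmono
  have hyw : (y : EReal) < w := lt_trans (by exact_mod_cast hyz) hzw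
  have hAmove : ∀ t : ℝ, t ≤ (f * g) t := fun t =>
    le_trans (hgmono t) (hfmono (g t))
  -- injectivity
  have hinj : Function.Injective φ := by
    rw [injective_iff_map_eq_one]
    intro e he
    obtain ⟨p, hp, q, hq, rfl⟩ := ChainAux.decomp e
    have hpq : φ p = φ q := by
      rw [map_mul, map_inv] at he
      calc φ p = φ p * ((φ p)⁻¹ * φ q) := by rw [he]; group
        _ = φ q := by group
    obtain ⟨l₁, hs₁, rfl⟩ := ChainAux.sorted_rep p hp
    obtain ⟨l₂, hs₂, rfl⟩ := ChainAux.sorted_rep q hq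
    rw [hφeval, hφeval] at hpq
    have hll : l₁ = l₂ := ChainAux.sorted_inj hsA hsg hxy hyw hAmove hgmono
      (l₁.length + l₂.length) l₁ l₂ (le_refl _) hs₁ hs₂ hpq
    rw [hll]
    group
  -- range
  have hAmem : f * g ∈ Subgroup.closure ({f, g} : Set HomeoR) :=
    Subgroup.mul_mem _ (Subgroup.subset_closure (by left; rfl))
      (Subgroup.subset_closure (by right; rfl))
  have hgmem : g ∈ Subgroup.closure ({f, g} : Set HomeoR) :=
    Subgroup.subset_closure (by right; rfl)
  have hfmem : f ∈ Subgroup.closure ({f * g, g} : Set HomeoR) := by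
    have h1 : f * g ∈ Subgroup.closure ({f * g, g} : Set HomeoR) :=
      Subgroup.subset_closure (by left; rfl)
    have h2 : g ∈ Subgroup.closure ({f * g, g} : Set HomeoR) :=
      Subgroup.subset_closure (by right; rfl)
    have := Subgroup.mul_mem _ h1 (Subgroup.inv_mem _ h2)
    rwa [mul_inv_cancel_right] at this
  have hcl : Subgroup.closure ({f * g, g} : Set HomeoR) =
      Subgroup.closure ({f, g} : Set HomeoR) := by
    apply le_antisymm
    · apply (Subgroup.closure_le _).2
      rintro u (rfl | rfl)
      · exact hAmem
      · exact hgmem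
    · apply (Subgroup.closure_le _).2
      rintro u (rfl | rfl)
      · exact hfmem
      · exact Subgroup.subset_closure (by right; rfl)
  have hrange : φ.range = Subgroup.closure ({f, g} : Set HomeoR) := by
    rw [MonoidHom.range_eq_map, ← ChainAux.top_gen, MonoidHom.map_closure]
    rw [Set.image_pair, hφa, hφb, hcl]
  exact ⟨(MulEquiv.subgroupCongr hrange.symm).trans (MonoidHom.ofInjective hinj).symm⟩
end

section
/- Every chain group G ≤ Homeo⁺(ℝ) has trivial center, and its commutator subgroup is perfect: G′′ = G′. -/
open scoped commutatorElement

/-- A group generated by `S` whose generator-commutators lie in the second derived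
subgroup has perfect commutator subgroup. -/
theorem perfect_of_gens {Γ : Type*} [Group Γ] (S : Set Γ) (hS : Subgroup.closure S = ⊤)
    (h : ∀ s ∈ S, ∀ t ∈ S, ⁅s, t⁆ ∈ (⁅commutator Γ, commutator Γ⁆ : Subgroup Γ)) :
    (⁅commutator Γ, commutator Γ⁆ : Subgroup Γ) = commutator Γ := by
  refine le_antisymm (Subgroup.commutator_mono le_top le_top) ?_
  have hcomm : ∀ x y : Γ,
      Commute (QuotientGroup.mk (s := ⁅commutator Γ, commutator Γ⁆) x) (QuotientGroup.mk y) := by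
    intro x y
    have hx : x ∈ Subgroup.closure S := hS ▸ Subgroup.mem_top x
    have hy : y ∈ Subgroup.closure S := hS ▸ Subgroup.mem_top y
    induction hx, hy using Subgroup.closure_induction₂ with
    | mem s t hs ht =>
      have : ((⁅s, t⁆ : Γ) : Γ ⧸ ⁅commutator Γ, commutator Γ⁆) = 1 :=
        (QuotientGroup.eq_one_iff _).mpr (h s hs t ht)
      rw [show ((⁅s, t⁆ : Γ) : Γ ⧸ ⁅commutator Γ, commutator Γ⁆)
            = ⁅(QuotientGroup.mk s : Γ ⧸ ⁅commutator Γ, commutator Γ⁆), QuotientGroup.mk t⁆ from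
          map_commutatorElement (QuotientGroup.mk' _) s t] at this
      exact commutatorElement_eq_one_iff_commute.mp this
    | one_left y hy => exact Commute.one_left _
    | one_right x hx => exact Commute.one_right _
    | mul_left x y z hx hy hz h1 h2 => exact (h1.mul_left h2 : _)
    | mul_right x y z hx hy hz h1 h2 => exact (h1.mul_right h2 : _)
    | inv_left x y hx hy h1 => exact h1.inv_left
    | inv_right x y hx hy h1 => exact h1.inv_right
  rw [commutator, Subgroup.commutator_le]
  intro g _ k _
  have : ((⁅g, k⁆ : Γ) : Γ ⧸ ⁅commutator Γ, commutator Γ⁆) = 1 := by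
    rw [show ((⁅g, k⁆ : Γ) : Γ ⧸ ⁅commutator Γ, commutator Γ⁆)
          = ⁅(QuotientGroup.mk g : Γ ⧸ ⁅commutator Γ, commutator Γ⁆), QuotientGroup.mk k⁆ from
        map_commutatorElement (QuotientGroup.mk' _) g k]
    exact commutatorElement_eq_one_iff_commute.mpr (hcomm g k)
  exact (QuotientGroup.eq_one_iff _).mp this
section ThompsonPerfect

variable {Γ : Type*} [Group Γ]

/-- The six-fold product of commutators of elements of the derived subgroup
appearing in the key identity. -/
def thompsonKexpr (α β : Γ) : Γ :=
  ⁅(α*⁅β,α⁆*α⁻¹)⁻¹, ⁅β,α⁆⁻¹ * (α⁻¹*⁅β,α⁆*α)⁻¹ * (α⁻¹*⁅β^2,α⁆*α) * ⁅β^2,α⁆ * ⁅β,α⁆⁻¹ *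
      (α⁻¹*⁅β,α⁆*α)⁻¹ * ⁅β,α⁆ * ⁅β^2,α⁆⁻¹ * ⁅β,α⁆⁆ *
  ⁅⁅β,α⁆⁻¹, (α⁻¹*⁅β,α⁆*α)⁻¹ * (α⁻¹*⁅β^2,α⁆*α) * ⁅β^2,α⁆ * ⁅β,α⁆⁻¹ * (α⁻¹*⁅β,α⁆*α)⁻¹⁆ *
  ⁅(α⁻¹*⁅β,α⁆*α)⁻¹, (α⁻¹*⁅β^2,α⁆*α) * ⁅β^2,α⁆ * ⁅β,α⁆⁻¹ * (α⁻¹*⁅β,α⁆*α)⁻¹ * ⁅β^2,α⁆⁻¹ * ⁅β,α⁆⁆ *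
  ⁅(α⁻¹*⁅β^2,α⁆*α), ⁅β^2,α⁆ * ⁅β,α⁆⁻¹ * (α⁻¹*⁅β,α⁆*α)⁻¹ * ⁅β^2,α⁆⁻¹ * ⁅β,α⁆⁆ *
  ⁅⁅β^2,α⁆, ⁅β,α⁆⁻¹ * (α⁻¹*⁅β,α⁆*α)⁻¹⁆ *
  ⁅⁅β,α⁆⁻¹, (α⁻¹*⁅β,α⁆*α)⁻¹⁆

theorem thompson_key_id (α β : Γ) :
    ⁅α,β⁆ = (((α⁻¹*β) * ⁅β⁻¹*α, α*β*α⁻¹⁆ * (α⁻¹*β)⁻¹) * (β * ⁅β⁻¹*α, α*β*α⁻¹⁆ * β⁻¹) *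
      ((α⁻¹*β) * ⁅β⁻¹*α, α^2*β*α⁻¹^2⁆⁻¹ * (α⁻¹*β)⁻¹)) * thompsonKexpr α β := by
  unfold thompsonKexpr; group

theorem thompson_key_id' (α β : Γ) (h1 : ⁅β⁻¹*α, α*β*α⁻¹⁆ = 1)
    (h2 : ⁅β⁻¹*α, α^2*β*α⁻¹^2⁆ = 1) : ⁅α,β⁆ = thompsonKexpr α β := by
  have hW : (((α⁻¹*β) * ⁅β⁻¹*α, α*β*α⁻¹⁆ * (α⁻¹*β)⁻¹) * (β * ⁅β⁻¹*α, α*β*α⁻¹⁆ * β⁻¹) *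
      ((α⁻¹*β) * ⁅β⁻¹*α, α^2*β*α⁻¹^2⁆⁻¹ * (α⁻¹*β)⁻¹)) = 1 := by
    rw [h1, h2]; group
  rw [thompson_key_id α β, hW, one_mul]

/-- In any group, `thompsonKexpr α β` lies in the second derived subgroup. -/
theorem thompsonKexpr_mem (α β : Γ) :
    thompsonKexpr α β ∈ (⁅commutator Γ, commutator Γ⁆ : Subgroup Γ) := by
  have memD1 : ∀ g h : Γ, ⁅g, h⁆ ∈ commutator Γ := fun g h =>
    Subgroup.commutator_mem_commutator (Subgroup.mem_top g) (Subgroup.mem_top h)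
  have hconj : ∀ g w : Γ, w ∈ commutator Γ → g * w * g⁻¹ ∈ commutator Γ := fun g w hw =>
    Subgroup.Normal.conj_mem inferInstance w hw g
  have hc1 : ⁅β,α⁆ ∈ commutator Γ := memD1 _ _
  have hc2 : ⁅β^2,α⁆ ∈ commutator Γ := memD1 _ _
  have hg11 : α*⁅β,α⁆*α⁻¹ ∈ commutator Γ := hconj α _ hc1
  have hgm11 : α⁻¹*⁅β,α⁆*α ∈ commutator Γ := by
    have := hconj α⁻¹ _ hc1; rwa [inv_inv] at this
  have hgm12 : α⁻¹*⁅β^2,α⁆*α ∈ commutator Γ := by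
    have := hconj α⁻¹ _ hc2; rwa [inv_inv] at this
  unfold thompsonKexpr
  refine mul_mem (mul_mem (mul_mem (mul_mem (mul_mem ?_ ?_) ?_) ?_) ?_) ?_ <;>
    exact Subgroup.commutator_mem_commutator (by
        first
        | exact inv_mem hg11 | exact inv_mem hc1 | exact inv_mem hgm11 | exact hgm12
        | exact hc2)
      (by
        repeat'
          first
          | exact inv_mem hc1 | exact inv_mem hgm11 | exact hgm12 | exact hc2 | exact hc1
          | exact inv_mem hc2
          | apply mul_mem)

end ThompsonPerfect
section ThompsonF

/-- Thompson's group `F` as a presented group (definitionally `ThompsonF`). -/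
abbrev TPG : Type := PresentedGroup thompsonFRels

/-- The first generator of Thompson's group `F`. -/
def tA : TPG := PresentedGroup.of 0

/-- The second generator of Thompson's group `F`. -/
def tB : TPG := PresentedGroup.of 1

theorem thompsonF_rel₁ : ⁅tB⁻¹ * tA, tA * tB * tA⁻¹⁆ = 1 := by
  have hmem : (⁅(FreeGroup.of 1 : FreeGroup (Fin 2))⁻¹ * FreeGroup.of 0,
      FreeGroup.of 0 * FreeGroup.of 1 * (FreeGroup.of 0)⁻¹⁆) ∈ thompsonFRels :=
    Set.mem_insert _ _
  have h1 : (PresentedGroup.mk thompsonFRels) (⁅(FreeGroup.of 1 : FreeGroup (Fin 2))⁻¹ *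
      FreeGroup.of 0, FreeGroup.of 0 * FreeGroup.of 1 * (FreeGroup.of 0)⁻¹⁆) = 1 :=
    (QuotientGroup.eq_one_iff _).mpr (Subgroup.subset_normalClosure hmem)
  rw [map_commutatorElement] at h1
  simpa [tA, tB, PresentedGroup.of, map_mul, map_inv] using h1

theorem thompsonF_rel₂ : ⁅tB⁻¹ * tA, tA ^ 2 * tB * tA⁻¹ ^ 2⁆ = 1 := by
  have hmem : (⁅(FreeGroup.of 1 : FreeGroup (Fin 2))⁻¹ * FreeGroup.of 0,
      (FreeGroup.of 0) ^ 2 * FreeGroup.of 1 * ((FreeGroup.of 0)⁻¹) ^ 2⁆) ∈ thompsonFRels :=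
    Set.mem_insert_of_mem _ rfl
  have h1 : (PresentedGroup.mk thompsonFRels) (⁅(FreeGroup.of 1 : FreeGroup (Fin 2))⁻¹ *
      FreeGroup.of 0, (FreeGroup.of 0) ^ 2 * FreeGroup.of 1 * ((FreeGroup.of 0)⁻¹) ^ 2⁆) = 1 :=
    (QuotientGroup.eq_one_iff _).mpr (Subgroup.subset_normalClosure hmem)
  rw [map_commutatorElement] at h1
  simpa [tA, tB, PresentedGroup.of, map_mul, map_inv, map_pow] using h1

theorem thompsonF_gens : Subgroup.closure ({tA, tB} : Set TPG) = ⊤ := by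
  have h : Set.range (PresentedGroup.of : Fin 2 → TPG) = {tA, tB} := by
    ext x
    constructor
    · rintro ⟨i, rfl⟩
      fin_cases i
      · exact Or.inl rfl
      · exact Or.inr rfl
    · rintro (rfl | rfl)
      exacts [⟨0, rfl⟩, ⟨1, rfl⟩]
  have := PresentedGroup.closure_range_of thompsonFRels
  rw [h] at this
  exact this

/-- The commutator subgroup of Thompson's group `F` is perfect. -/
theorem thompsonF_perfect :
    (⁅commutator ThompsonF, commutator ThompsonF⁆ : Subgroup ThompsonF) =
      commutator ThompsonF := by
  show (⁅commutator TPG, commutator TPG⁆ : Subgroup TPG) = commutator TPG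
  have hmain : ⁅tA, tB⁆ ∈ (⁅commutator TPG, commutator TPG⁆ : Subgroup TPG) := by
    rw [thompson_key_id' tA tB thompsonF_rel₁ thompsonF_rel₂]
    exact thompsonKexpr_mem tA tB
  apply perfect_of_gens ({tA, tB} : Set TPG) thompsonF_gens
  rintro s (rfl | rfl) t (rfl | rfl)
  · rw [commutatorElement_self]; exact one_mem _
  · exact hmain
  · rw [← commutatorElement_inv]; exact inv_mem hmain
  · rw [commutatorElement_self]; exact one_mem _

end ThompsonF
section Dynamics

open Filter Topology

theorem mem_supp_iff {f : HomeoR} {x : ℝ} : x ∈ supp f ↔ f x ≠ x := Iff.rfl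

theorem not_mem_supp {f : HomeoR} {x : ℝ} (h : x ∉ supp f) : f x = x := not_not.mp h

theorem supp_apply_mem {f : HomeoR} {x : ℝ} (hx : x ∈ supp f) : f x ∈ supp f := by
  intro h
  exact hx (f.injective h)

theorem apply_inv_apply (f : HomeoR) (x : ℝ) : f (f⁻¹ x) = x := by
  have := congrArg (fun φ : HomeoR => φ x) (mul_inv_cancel f)
  simpa using this

theorem inv_apply_apply (f : HomeoR) (x : ℝ) : f⁻¹ (f x) = x := by
  have := congrArg (fun φ : HomeoR => φ x) (inv_mul_cancel f)
  simpa using this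

theorem supp_inv_apply_mem {f : HomeoR} {x : ℝ} (hx : x ∈ supp f) : f⁻¹ x ∈ supp f := by
  intro h
  apply hx
  have h2 := congrArg f h
  rwa [apply_inv_apply] at h2

theorem commute_supp_invariant {f g : HomeoR} (h : Commute f g) {x : ℝ}
    (hx : x ∈ supp f) : g x ∈ supp f := by
  intro hfix
  apply hx
  have : f (g x) = g (f x) := by
    have := congrArg (fun φ : HomeoR => φ x) h.eq
    simpa using this
  rw [hfix] at this
  exact g.injective this.symm

theorem homeoR_ext {f g : HomeoR} (h : ∀ x, f x = g x) : f = g := by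
  ext x; exact h x

theorem homeo_one_apply (x : ℝ) : (1 : HomeoR) x = x := rfl

theorem homeo_mul_apply (f g : HomeoR) (x : ℝ) : (f * g) x = f (g x) := rfl

theorem disjoint_supp_commute {f g : HomeoR} (h : supp f ∩ supp g = ∅) : Commute f g := by
  have hdis : ∀ x, x ∈ supp f → x ∉ supp g := by
    intro x hxf hxg
    exact absurd (Set.mem_inter hxf hxg) (h ▸ Set.notMem_empty x)
  apply homeoR_ext
  intro x
  rw [homeo_mul_apply, homeo_mul_apply]
  by_cases hxf : x ∈ supp f
  · rw [not_mem_supp (hdis x hxf), not_mem_supp (hdis (f x) (supp_apply_mem hxf))]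
  · by_cases hxg : x ∈ supp g
    · have hgx : g x ∈ supp g := supp_apply_mem hxg
      have : g x ∉ supp f := fun hc => hdis _ hc hgx
      rw [not_mem_supp hxf, not_mem_supp this]
    · rw [not_mem_supp hxf, not_mem_supp hxg, not_mem_supp hxf]

/-- On its (interval) support, an upward homeomorphism moves points strictly up. -/
theorem lt_apply_of_mem_supp {φ : HomeoR} (hup : ∀ t, t ≤ φ t) {x : ℝ}
    (hx : x ∈ supp φ) : x < φ x := lt_of_le_of_ne (hup x) (Ne.symm hx)

theorem inv_apply_lt_of_mem_supp {φ : HomeoR} (hup : ∀ t, t ≤ φ t) {x : ℝ}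
    (hx : x ∈ supp φ) : φ⁻¹ x < x := by
  have h1 : φ⁻¹ x ∈ supp φ := supp_inv_apply_mem hx
  have h2 : (φ⁻¹ : HomeoR) x ≤ φ (φ⁻¹ x) := hup _
  rw [apply_inv_apply] at h2
  refine lt_of_le_of_ne h2 fun hc => ?_
  apply h1
  rw [hc]
  have := congrArg φ hc
  rw [apply_inv_apply] at this
  rw [← this]

/-- Accumulation: if `u` commutes with `φ`, `supp φ = eIoo A B`, and `supp u` meets
`eIoo A B`, then `supp u` has points in `(A, c)` for every real `c > A`. -/
theorem supp_accumulates {φ u : HomeoR} {A B : EReal} (hsupp : supp φ = eIoo A B)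
    (hup : ∀ t, t ≤ φ t) (hcomm : Commute φ u) {x : ℝ} (hxu : x ∈ supp u)
    (hxJ : x ∈ eIoo A B) {c : ℝ} (hc : A < (c : EReal)) :
    ∃ t : ℝ, t ∈ supp u ∧ A < (t : EReal) ∧ t < c := by
  by_contra hcon
  push_neg at hcon
  set s : ℕ → ℝ := fun k => (fun t => (φ⁻¹ : HomeoR) t)^[k] x with hs
  have hstep : ∀ k, s (k + 1) = φ⁻¹ (s k) := fun k =>
    Function.iterate_succ_apply' (fun t => (φ⁻¹ : HomeoR) t) k x
  have hinv : ∀ k, s k ∈ supp u ∧ s k ∈ eIoo A B := by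
    intro k
    induction k with
    | zero => exact ⟨hxu, hxJ⟩
    | succ k ih =>
      rw [hstep]
      constructor
      · exact commute_supp_invariant (f := u) (g := φ⁻¹) (hcomm.symm.inv_right) ih.1
      · have : (φ⁻¹ : HomeoR) (s k) ∈ supp φ := supp_inv_apply_mem (hsupp ▸ ih.2)
        rwa [hsupp] at this
  have hdec : ∀ k, s (k + 1) < s k := by
    intro k
    rw [hstep]
    exact inv_apply_lt_of_mem_supp hup (hsupp ▸ (hinv k).2)
  have hlb : ∀ k, c ≤ s k := fun k => hcon (s k) (hinv k).1 (hinv k).2.1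
  have hanti : Antitone s := antitone_nat_of_succ_le fun k => le_of_lt (hdec k)
  have hbdd : BddBelow (Set.range s) := ⟨c, by rintro y ⟨k, rfl⟩; exact hlb k⟩
  have hL : Tendsto s atTop (𝓝 (⨅ k, s k)) := tendsto_atTop_ciInf hanti hbdd
  set L : ℝ := ⨅ k, s k with hLdef
  have hcont : Continuous fun t : ℝ => (φ⁻¹ : HomeoR) t := (φ⁻¹ : HomeoR).continuous
  have h1 : Tendsto (fun k => (φ⁻¹ : HomeoR) (s k)) atTop (𝓝 ((φ⁻¹ : HomeoR) L)) :=
    (hcont.tendsto L).comp hL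
  have h2 : Tendsto (fun k => s (k + 1)) atTop (𝓝 L) :=
    hL.comp (tendsto_add_atTop_nat 1)
  have h3 : (fun k => s (k + 1)) = fun k => (φ⁻¹ : HomeoR) (s k) := funext hstep
  have h2' : Tendsto (fun k => (φ⁻¹ : HomeoR) (s k)) atTop (𝓝 L) := by
    rw [← h3]; exact h2
  have hfix : (φ⁻¹ : HomeoR) L = L := tendsto_nhds_unique h1 h2' 
  have hcL : c ≤ L := le_ciInf hlb
  have hLx : L ≤ x := ciInf_le hbdd 0
  have hLJ : L ∈ eIoo A B := by
    constructor
    · exact lt_of_lt_of_le hc (EReal.coe_le_coe_iff.mpr hcL)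
    · exact lt_of_le_of_lt (EReal.coe_le_coe_iff.mpr hLx) hxJ.2
  have : φ L = L := by
    conv_lhs => rw [← hfix]
    exact apply_inv_apply φ L
  exact (hsupp ▸ hLJ : L ∈ supp φ) this

end Dynamics
section Center

open Filter Topology

theorem zpow_apply_ne_of_mem_supp {φ : HomeoR} (hup : ∀ t, t ≤ φ t) {x : ℝ}
    (hx : x ∈ supp φ) : ∀ m : ℤ, m ≠ 0 → (φ ^ m) x ≠ x := by
  have hnat : ∀ k : ℕ, x < (φ ^ (k + 1) : HomeoR) x ∧ (φ ^ (k + 1) : HomeoR) x ∈ supp φ := by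
    intro k
    induction k with
    | zero =>
      rw [pow_one]
      exact ⟨lt_apply_of_mem_supp hup hx, supp_apply_mem hx⟩
    | succ k ih =>
      have h1 : (φ ^ (k + 1 + 1) : HomeoR) x = φ ((φ ^ (k + 1) : HomeoR) x) := by
        rw [pow_succ']; rfl
      rw [h1]
      exact ⟨lt_trans ih.1 (lt_apply_of_mem_supp hup ih.2), supp_apply_mem ih.2⟩
  have hpos : ∀ k : ℕ, (φ ^ ((k : ℤ) + 1)) x ≠ x := by
    intro k
    have : (φ ^ ((k : ℤ) + 1)) = (φ ^ (k + 1) : HomeoR) := by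
      rw [← zpow_natCast]; norm_num
    rw [this]
    exact ne_of_gt (hnat k).1
  intro m hm
  rcases lt_trichotomy m 0 with hneg | hzero | hposm
  · intro heq
    obtain ⟨k, hk⟩ : ∃ k : ℕ, -m = (k : ℤ) + 1 := by
      refine ⟨(-m - 1).toNat, ?_⟩
      omega
    apply hpos k
    have h2 : (φ ^ ((k : ℤ) + 1)) ((φ ^ m) x) = (φ ^ ((k : ℤ) + 1 + m)) x := by
      conv_rhs => rw [zpow_add]
      rfl
    rw [heq] at h2
    rw [h2, show (k : ℤ) + 1 + m = 0 by omega, zpow_zero, homeo_one_apply]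
  · exact absurd hzero hm
  · obtain ⟨k, hk⟩ : ∃ k : ℕ, m = (k : ℤ) + 1 := ⟨(m - 1).toNat, by omega⟩
    rw [hk]
    exact hpos k

end Center
section CenterMain

/-- Monotonicity of left endpoints of a chain of intervals. -/
theorem chain_a_mono {n : ℕ} {a b : Fin n → EReal} (hchain : IsChainOfIntervals a b)
    (i j : Fin n) (hij : i ≤ j) : a i ≤ a j := by
  obtain ⟨iv, hi⟩ := i
  obtain ⟨jv, hj⟩ := j
  simp only [Fin.mk_le_mk] at hij
  have key : ∀ (d k : ℕ) (hk : k + d < n), a ⟨k, by omega⟩ ≤ a ⟨k + d, hk⟩ := by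
    intro d
    induction d with
    | zero => intro k hk; exact le_of_eq (congrArg a (Fin.mk_eq_mk.mpr (by omega)))
    | succ d ih =>
      intro k hk
      have h1 : k + d < n := by omega
      have h2 : k + d + 1 < n := by omega
      refine le_of_lt (lt_of_le_of_lt (ih k h1) ?_)
      have h3 : a ⟨k + d + 1, h2⟩ = a ⟨k + (d + 1), hk⟩ := congrArg a (Fin.mk_eq_mk.mpr (by omega))
      exact h3 ▸ (hchain.2.1 (k + d) h2).1
  have := key (jv - iv) iv (by omega)
  have h4 : a ⟨iv + (jv - iv), by omega⟩ = a ⟨jv, hj⟩ := congrArg a (Fin.mk_eq_mk.mpr (by omega))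
  exact h4 ▸ this

theorem center_trivial_aux {n : ℕ} (f : Fin n → HomeoR) (a b : Fin n → EReal)
    (hn : 2 ≤ n) (hchain : IsChainOfIntervals a b)
    (hsupp : ∀ i, supp (f i) = eIoo (a i) (b i)) (hup : ∀ i, ∀ t : ℝ, t ≤ f i t)
    (ζ : HomeoR) (hζG : ζ ∈ Subgroup.closure (Set.range f))
    (hζcomm : ∀ i : Fin n, Commute (f i) ζ) : ζ = 1 := by
  by_contra hne
  have npos : 0 < n := by omega
  have h1n : 1 < n := by omega
  set i0 : Fin n := ⟨0, npos⟩ with hi0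
  set i1 : Fin n := ⟨1, h1n⟩ with hi1
  set φ : HomeoR := f i0 with hφ
  set A : EReal := a i0 with hA
  -- the endpoint a₁ is a real number
  have ha1bot : (⊥ : EReal) < a i1 := lt_of_le_of_lt bot_le ((hchain.2.1 0 h1n).1)
  have ha1top : a i1 < (⊤ : EReal) := lt_of_lt_of_le (hchain.2.1 0 h1n).2.1 le_top
  obtain ⟨r1, hr1⟩ : ∃ r : ℝ, a i1 = (r : EReal) := by
    lift (a i1) to ℝ using ⟨ne_of_lt ha1top, ne_of_gt ha1bot⟩ with r
    exact ⟨r, rfl⟩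
  have hAr1 : A < (r1 : EReal) := hr1 ▸ (hchain.2.1 0 h1n).1
  have hr1b0 : (r1 : EReal) < b i0 := hr1 ▸ (hchain.2.1 0 h1n).2.1
  have hr1J0 : r1 ∈ eIoo (a i0) (b i0) := ⟨hAr1, hr1b0⟩
  -- powers of φ preserve (A, ∞)
  have pres1 : ∀ t : ℝ, A < (t : EReal) → A < ((φ t : ℝ) : EReal) :=
    fun t ht => lt_of_lt_of_le ht (EReal.coe_le_coe_iff.mpr (hup i0 t))
  have presInv : ∀ t : ℝ, A < (t : EReal) → A < ((φ⁻¹ t : ℝ) : EReal) := by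
    intro t ht
    by_cases hts : t ∈ supp φ
    · have := supp_inv_apply_mem hts
      rw [hsupp i0] at this
      exact this.1
    · have h1 : φ t = t := not_mem_supp hts
      have h2 : φ⁻¹ t = t := by
        conv_lhs => rw [← h1]
        exact inv_apply_apply φ t
      rwa [h2]
  have pres : ∀ (k : ℤ) (t : ℝ), A < (t : EReal) → A < (((φ ^ k) t : ℝ) : EReal) := by
    intro k
    induction k using Int.induction_on with
    | zero => intro t ht; rwa [zpow_zero, homeo_one_apply]
    | succ i ih =>
      intro t ht
      have h1 : (φ ^ ((i : ℤ) + 1)) t = (φ ^ (i : ℤ)) (φ t) := by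
        rw [zpow_add_one]; rfl
      rw [h1]
      exact ih (φ t) (pres1 t ht)
    | pred i ih =>
      intro t ht
      have h1 : (φ ^ (-(i : ℤ) - 1)) t = (φ ^ (-(i : ℤ))) (φ⁻¹ t) := by
        rw [zpow_sub_one]; rfl
      rw [h1]
      exact ih (φ⁻¹ t) (presInv t ht)
  -- germ at the left endpoint
  have germ : ∀ g ∈ Subgroup.closure (Set.range f), ∃ (m : ℤ) (c : ℝ), A < (c : EReal) ∧
      ∀ t : ℝ, A < (t : EReal) → t < c → g t = (φ ^ m) t := by
    intro g hg
    induction hg using Subgroup.closure_induction with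
    | mem g hgmem =>
      obtain ⟨i, rfl⟩ := hgmem
      by_cases hiv : i.val = 0
      · refine ⟨1, r1, hAr1, fun t _ _ => ?_⟩
        rw [zpow_one]
        have : i = i0 := Fin.ext hiv
        rw [this, ← hφ]
      · refine ⟨0, r1, hAr1, fun t _ htc => ?_⟩
        rw [zpow_zero, homeo_one_apply]
        apply not_mem_supp
        rw [hsupp i]
        rintro ⟨hai, -⟩
        have h2 : a i1 ≤ a i := chain_a_mono hchain i1 i (by
          rw [Fin.le_def]; show 1 ≤ i.val; omega)
        rw [hr1] at h2
        exact absurd (lt_of_le_of_lt h2 hai) (by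
          exact not_lt.mpr (le_of_lt (EReal.coe_lt_coe_iff.mpr htc)) )
    | one => exact ⟨0, r1, hAr1, fun t _ _ => by rw [zpow_zero]⟩
    | mul g h _ _ ihg ihh =>
      obtain ⟨m, c, hcA, hgc⟩ := ihg
      obtain ⟨m', c', hc'A, hhc⟩ := ihh
      set ψ : HomeoR := φ ^ m' with hψ
      refine ⟨m + m', min c' (ψ⁻¹ c), ?_, ?_⟩
      · rcases min_cases c' (ψ⁻¹ c) with ⟨heq, -⟩ | ⟨heq, -⟩ <;> rw [heq]
        · exact hc'A
        · have := pres (-m') c hcA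
          rwa [zpow_neg] at this
      · intro t htA htc
        have htc' : t < c' := lt_of_lt_of_le htc (min_le_left _ _)
        have htψ : t < ψ⁻¹ c := lt_of_lt_of_le htc (min_le_right _ _)
        have hht : h t = ψ t := hhc t htA htc'
        have hψtA : A < ((ψ t : ℝ) : EReal) := pres m' t htA
        have hψtc : ψ t < c := by
          have := ψ.lt_iff_lt.mpr htψ
          rwa [apply_inv_apply] at this
        have : (g * h) t = g (h t) := rfl
        rw [this, hht, hgc (ψ t) hψtA hψtc]
        have : (φ ^ m) (ψ t) = (φ ^ m * φ ^ m') t := rfl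
        rw [this, ← zpow_add]
    | inv g _ ihg =>
      obtain ⟨m, c, hcA, hgc⟩ := ihg
      set ψ : HomeoR := φ ^ m with hψ
      refine ⟨-m, ψ c, pres m c hcA, ?_⟩
      intro t htA htc
      have hsA : A < ((ψ⁻¹ t : ℝ) : EReal) := by
        have := pres (-m) t htA
        rwa [zpow_neg] at this
      have hsc : ψ⁻¹ t < c := by
        have h1 : ψ (ψ⁻¹ t) < ψ c := by rwa [apply_inv_apply]
        exact (ψ.lt_iff_lt).mp h1
      have h2 : g (ψ⁻¹ t) = ψ (ψ⁻¹ t) := hgc (ψ⁻¹ t) hsA hsc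
      rw [apply_inv_apply] at h2
      have h3 : g⁻¹ t = g⁻¹ (g (ψ⁻¹ t)) := by rw [h2]
      rw [inv_apply_apply] at h3
      rw [h3, zpow_neg]
  -- `supp ζ` meets some `J i`
  obtain ⟨x₀, hx₀⟩ : ∃ x, ζ x ≠ x := by
    by_contra hfix
    push_neg at hfix
    exact hne (homeoR_ext fun x => hfix x)
  have hx0i : ∃ i : Fin n, x₀ ∈ supp (f i) := by
    by_contra hnone
    push_neg at hnone
    have hfixall : ∀ g ∈ Subgroup.closure (Set.range f), g x₀ = x₀ := by
      intro g hg
      induction hg using Subgroup.closure_induction with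
      | mem g hgmem =>
        obtain ⟨i, rfl⟩ := hgmem
        exact not_mem_supp (hnone i)
      | one => rfl
      | mul g h _ _ ihg ihh =>
        have : (g * h) x₀ = g (h x₀) := rfl
        rw [this, ihh, ihg]
      | inv g _ ihg =>
        conv_lhs => rw [← ihg]
        exact inv_apply_apply g x₀
    exact hx₀ (hfixall ζ hζG)
  -- `supp ζ` meets `J 0`
  have down : ∀ (k : ℕ) (hk : k < n), (supp ζ ∩ eIoo (a ⟨k, hk⟩) (b ⟨k, hk⟩)).Nonempty →
      (supp ζ ∩ eIoo (a i0) (b i0)).Nonempty := by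
    intro k
    induction k with
    | zero => intro hk h; exact h
    | succ k ih =>
      rintro hk ⟨x, hxζ, hxJ⟩
      have hk' : k < n := by omega
      have hlt : a ⟨k + 1, hk⟩ < b ⟨k, hk'⟩ := (hchain.2.1 k hk).2.1
      obtain ⟨c, hc1, hc2⟩ := EReal.exists_between_coe_real hlt
      obtain ⟨t, htζ, htA, htc⟩ :=
        supp_accumulates (hsupp ⟨k + 1, hk⟩) (hup _) (hζcomm ⟨k + 1, hk⟩) hxζ hxJ hc1
      refine ih hk' ⟨t, htζ, ?_, ?_⟩
      · exact lt_trans (hchain.2.1 k hk).1 htA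
      · exact lt_trans (EReal.coe_lt_coe_iff.mpr htc) hc2
  have S0 : (supp ζ ∩ eIoo (a i0) (b i0)).Nonempty := by
    obtain ⟨i, hi⟩ := hx0i
    have hxJ : x₀ ∈ eIoo (a i) (b i) := (hsupp i) ▸ hi
    exact down i.val i.isLt ⟨x₀, hx₀, hxJ⟩
  -- germ of ζ at the left end
  obtain ⟨m, c, hcA, hζc⟩ := germ ζ hζG
  set u : HomeoR := φ ^ (-m) * ζ with hu
  have hucomm : Commute φ u := ((Commute.refl φ).zpow_right (-m)).mul_right (hζcomm i0)
  have hufix : ∀ t : ℝ, A < (t : EReal) → t < c → u t = t := by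
    intro t h1 h2
    have h3 : u t = (φ ^ (-m)) (ζ t) := rfl
    rw [h3, hζc t h1 h2, zpow_neg, inv_apply_apply]
  have hu0 : ∀ y, y ∈ supp u → y ∉ eIoo (a i0) (b i0) := by
    intro y hyu hyJ
    obtain ⟨t, htu, htA, htc⟩ := supp_accumulates (hsupp i0) (hup i0) hucomm hyu hyJ hcA
    exact htu (hufix t htA htc)
  have hζJ0 : ∀ t : ℝ, t ∈ eIoo (a i0) (b i0) → ζ t = (φ ^ m) t := by
    intro t htJ
    have h1 : u t = t := by
      by_contra h2
      exact hu0 t h2 htJ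
    have h3 : (φ ^ (-m)) (ζ t) = t := h1
    have h4 := congrArg (fun s : ℝ => (φ ^ m) s) h3
    simp only [zpow_neg] at h4
    rw [apply_inv_apply] at h4
    exact h4
  -- ζ fixes r1
  have key : ∀ ξ : HomeoR, Commute (f i1) ξ → ξ r1 ≤ r1 := by
    intro ξ hξ
    by_contra hgt
    push_neg at hgt
    have h1 : (r1 : EReal) < min ((ξ r1 : ℝ) : EReal) (b i1) :=
      lt_min (EReal.coe_lt_coe_iff.mpr hgt) (hr1 ▸ hchain.1 i1)
    obtain ⟨s, hs1, hs2⟩ := EReal.exists_between_coe_real h1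
    have hsJ1 : s ∈ supp (f i1) := by
      rw [hsupp i1]
      exact ⟨hr1 ▸ hs1, lt_of_lt_of_le hs2 (min_le_right _ _)⟩
    have hsξ : s < ξ r1 :=
      EReal.coe_lt_coe_iff.mp (lt_of_lt_of_le hs2 (min_le_left _ _))
    have hw : ξ⁻¹ s ∈ supp (f i1) := commute_supp_invariant hξ.inv_right hsJ1
    have hwlt : ξ⁻¹ s < r1 := by
      have h2 : (ξ⁻¹ : HomeoR) s < ξ⁻¹ (ξ r1) := (ξ⁻¹ : HomeoR).lt_iff_lt.mpr hsξ
      rwa [inv_apply_apply] at h2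
    rw [hsupp i1] at hw
    have : (r1 : EReal) < (ξ⁻¹ s : ℝ) := hr1 ▸ hw.1
    exact absurd (EReal.coe_lt_coe_iff.mp this) (not_lt.mpr (le_of_lt hwlt))
  have hfixr1 : ζ r1 = r1 := by
    have h5 := key ζ (hζcomm i1)
    have h6 := key ζ⁻¹ (hζcomm i1).inv_right
    have h7 : ζ (ζ⁻¹ r1) ≤ ζ r1 := ζ.le_iff_le.mpr h6
    rw [apply_inv_apply] at h7
    exact le_antisymm h5 h7
  -- final contradiction
  by_cases hm : m = 0
  · obtain ⟨y, hyζ, hyJ⟩ := S0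
    have h8 := hζJ0 y hyJ
    rw [hm, zpow_zero, homeo_one_apply] at h8
    exact hyζ h8
  · have h8 : ζ r1 = (φ ^ m) r1 := hζJ0 r1 hr1J0
    have h9 : (φ ^ m) r1 ≠ r1 :=
      zpow_apply_ne_of_mem_supp (hup i0) (show r1 ∈ supp φ from (hsupp i0) ▸ hr1J0) m hm
    exact h9 (h8 ▸ hfixr1)

end CenterMain
section Glue

/-- Perfectness of the commutator subgroup transfers along group isomorphisms. -/
theorem perfect_transfer {A : Type*} {B : Type} [Group A] [Group B] (e : A ≃* B)
    (h : (⁅commutator B, commutator B⁆ : Subgroup B) = commutator B) :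
    (⁅commutator A, commutator A⁆ : Subgroup A) = commutator A := by
  have htop : Subgroup.map e.symm.toMonoidHom (⊤ : Subgroup B) = ⊤ := by
    rw [← MonoidHom.range_eq_map]
    exact MonoidHom.range_eq_top.mpr e.symm.surjective
  have h1 : Subgroup.map e.symm.toMonoidHom (commutator B) = commutator A := by
    rw [commutator_def, commutator_def, Subgroup.map_commutator, htop]
  have h2 : Subgroup.map e.symm.toMonoidHom ⁅commutator B, commutator B⁆ =
      ⁅commutator A, commutator A⁆ := by
    rw [Subgroup.map_commutator, h1]
  rw [← h2, h, h1]

/-- The preimage of a generating set generates the closure subgroup. -/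
theorem closure_preimage_subtype_eq_top {Gr : Type*} [Group Gr] (S : Set Gr) :
    Subgroup.closure ((Subgroup.closure S).subtype ⁻¹' S) = ⊤ := by
  rw [eq_top_iff]
  rintro ⟨x, hx⟩ -
  have key : ∀ (y : Gr) (hy : y ∈ Subgroup.closure S),
      (⟨y, hy⟩ : ↥(Subgroup.closure S)) ∈
        Subgroup.closure ((Subgroup.closure S).subtype ⁻¹' S) := by
    intro y hy
    induction hy using Subgroup.closure_induction with
    | mem y hymem => exact Subgroup.subset_closure (by simpa using hymem)
    | one => exact Subgroup.one_mem _
    | mul y z hy hz ihy ihz =>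
      have : (⟨y * z, mul_mem hy hz⟩ : ↥(Subgroup.closure S)) = ⟨y, hy⟩ * ⟨z, hz⟩ := rfl
      rw [this]
      exact mul_mem ihy ihz
    | inv y hy ihy =>
      have : (⟨y⁻¹, inv_mem hy⟩ : ↥(Subgroup.closure S)) = (⟨y, hy⟩ : ↥(Subgroup.closure S))⁻¹ :=
        rfl
      rw [this]
      exact inv_mem ihy
  exact key x hx

/-- Commuting representatives give commuting subgroup elements. -/
theorem subtype_commute {Gr : Type*} [Group Gr] {H : Subgroup Gr} (s t : ↥H)
    (h : Commute (s : Gr) (t : Gr)) : Commute s t := Subtype.ext (by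
  have h1 : ((s * t : ↥H) : Gr) = (s : Gr) * t := rfl
  have h2 : ((t * s : ↥H) : Gr) = (t : Gr) * s := rfl
  rw [h1, h2]
  exact h)

end Glue
section DistantCommute

theorem chain_distant_commute {n : ℕ} (f : Fin n → HomeoR) (a b : Fin n → EReal)
    (hchain : IsChainOfIntervals a b) (hsupp : ∀ i, supp (f i) = eIoo (a i) (b i))
    (i j : Fin n) (hij : i.val + 2 ≤ j.val) : Commute (f i) (f j) := by
  apply disjoint_supp_commute
  rw [hsupp i, hsupp j]
  apply Set.eq_empty_iff_forall_notMem.mpr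
  rintro t ⟨⟨-, h1⟩, h2, -⟩
  have h3 : i.val + 2 < n := by omega
  have h4 : b i ≤ a ⟨i.val + 2, h3⟩ := hchain.2.2 i.val h3
  have h5 : a ⟨i.val + 2, h3⟩ ≤ a j := chain_a_mono hchain _ j (by
    rw [Fin.le_def]; exact hij)
  exact absurd (lt_trans (lt_of_lt_of_le h1 (le_trans h4 h5)) h2) (lt_irrefl _)

end DistantCommute
section Assembly

theorem stmt10_aux {n : ℕ} (f : Fin n → HomeoR) (hf : IsChainGens f) :
    Subgroup.center ↥(Subgroup.closure (Set.range f)) = ⊥ ∧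
      Subgroup.map (commutator ↥(Subgroup.closure (Set.range f))).subtype
          (commutator ↥(commutator ↥(Subgroup.closure (Set.range f)))) =
        commutator ↥(Subgroup.closure (Set.range f)) := by
  obtain ⟨⟨hn, a, b, hchain, hsupp, hup⟩, hF⟩ := hf
  constructor
  · -- trivial center
    rw [eq_bot_iff]
    intro z hz
    rw [Subgroup.mem_bot]
    have hζcomm : ∀ i : Fin n, Commute (f i) (z : HomeoR) := by
      intro i
      have hmem : f i ∈ Subgroup.closure (Set.range f) := Subgroup.subset_closure ⟨i, rfl⟩
      have h1 := Subgroup.mem_center_iff.mp hz ⟨f i, hmem⟩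
      exact congrArg Subtype.val h1
    exact Subtype.ext (center_trivial_aux f a b hn hchain hsupp hup _ z.2 hζcomm)
  · -- perfect commutator subgroup
    -- consecutive generators give commutators in the second derived subgroup
    have hcons : ∀ (s t : ↥(Subgroup.closure (Set.range f))) (i j : Fin n),
        f i = (s : HomeoR) → f j = (t : HomeoR) → j.val = i.val + 1 →
        ⁅s, t⁆ ∈ (⁅commutator ↥(Subgroup.closure (Set.range f)),
          commutator ↥(Subgroup.closure (Set.range f))⁆ :
            Subgroup ↥(Subgroup.closure (Set.range f))) := by
      intro s t i j hi hj hji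
      have hlt : i.val + 1 < n := hji ▸ j.isLt
      obtain ⟨e⟩ := hF i.val hlt
      set Kset : Set HomeoR := {f ⟨i.val, by omega⟩, f ⟨i.val + 1, hlt⟩} with hKset
      have hKperf := perfect_transfer (A := ↥(Subgroup.closure Kset)) e thompsonF_perfect
      have hmem1 : f i ∈ Kset := Set.mem_insert_iff.mpr (Or.inl (congrArg f (Fin.ext rfl)))
      have hmem2 : f j ∈ Kset := Set.mem_insert_iff.mpr
        (Or.inr (Set.mem_singleton_iff.mpr (congrArg f (Fin.ext hji))))
      set sK : ↥(Subgroup.closure Kset) := ⟨f i, Subgroup.subset_closure hmem1⟩ with hsK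
      set tK : ↥(Subgroup.closure Kset) := ⟨f j, Subgroup.subset_closure hmem2⟩ with htK
      have hmemK : ⁅sK, tK⁆ ∈ (⁅commutator ↥(Subgroup.closure Kset),
          commutator ↥(Subgroup.closure Kset)⁆ : Subgroup ↥(Subgroup.closure Kset)) := by
        rw [hKperf, commutator_def]
        exact Subgroup.commutator_mem_commutator (Subgroup.mem_top _) (Subgroup.mem_top _)
      have hKG : Subgroup.closure Kset ≤ Subgroup.closure (Set.range f) := by
        apply Subgroup.closure_mono
        rintro x (rfl | rfl)
        · exact ⟨_, rfl⟩
        · exact ⟨_, rfl⟩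
      set ι := Subgroup.inclusion hKG with hι
      have hmap : Subgroup.map ι (⁅commutator ↥(Subgroup.closure Kset),
          commutator ↥(Subgroup.closure Kset)⁆ : Subgroup ↥(Subgroup.closure Kset)) ≤
          ⁅commutator ↥(Subgroup.closure (Set.range f)),
            commutator ↥(Subgroup.closure (Set.range f))⁆ := by
        have hsub : Subgroup.map ι (commutator ↥(Subgroup.closure Kset)) ≤
            commutator ↥(Subgroup.closure (Set.range f)) := by
          rw [commutator_def, commutator_def, Subgroup.map_commutator]
          exact Subgroup.commutator_mono le_top le_top
        rw [Subgroup.map_commutator]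
        exact Subgroup.commutator_mono hsub hsub
      have hin := hmap (Subgroup.mem_map_of_mem ι hmemK)
      have heq : ι ⁅sK, tK⁆ = ⁅s, t⁆ := by
        rw [map_commutatorElement]
        congr 1
        · exact Subtype.ext (by rw [Subgroup.coe_inclusion]; exact hi)
        · exact Subtype.ext (by rw [Subgroup.coe_inclusion]; exact hj)
      rwa [heq] at hin
    have hperf : (⁅commutator ↥(Subgroup.closure (Set.range f)),
        commutator ↥(Subgroup.closure (Set.range f))⁆ :
          Subgroup ↥(Subgroup.closure (Set.range f))) =
        commutator ↥(Subgroup.closure (Set.range f)) := by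
      apply perfect_of_gens ((Subgroup.closure (Set.range f)).subtype ⁻¹' (Set.range f))
        (closure_preimage_subtype_eq_top _)
      intro s hs t ht
      obtain ⟨i, hi⟩ := hs
      obtain ⟨j, hj⟩ := ht
      simp only [Subgroup.coe_subtype] at hi hj
      rcases Nat.lt_trichotomy i.val j.val with hlt | heq | hgt
      · rcases Nat.eq_or_lt_of_le (Nat.succ_le_of_lt hlt) with hc | hfar
        · exact hcons s t i j hi hj hc.symm
        · have hcomm : Commute (f i) (f j) :=
            chain_distant_commute f a b hchain hsupp i j (by omega)
          have h1 : ⁅s, t⁆ = 1 := commutatorElement_eq_one_iff_commute.mpr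
            (subtype_commute s t (by rw [← hi, ← hj]; exact hcomm))
          rw [h1]; exact one_mem _
      · have h1 : s = t := Subtype.ext (by rw [← hi, ← hj, Fin.ext heq])
        rw [h1, commutatorElement_self]; exact one_mem _
      · rw [← commutatorElement_inv]
        apply inv_mem
        rcases Nat.eq_or_lt_of_le (Nat.succ_le_of_lt hgt) with hc | hfar
        · exact hcons t s j i hj hi hc.symm
        · have hcomm : Commute (f j) (f i) :=
            chain_distant_commute f a b hchain hsupp j i (by omega)
          have h1 : ⁅t, s⁆ = 1 := commutatorElement_eq_one_iff_commute.mpr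
            (subtype_commute t s (by rw [← hi, ← hj]; exact hcomm))
          rw [h1]; exact one_mem _
    rw [commutator_def (↥(commutator ↥(Subgroup.closure (Set.range f)))),
      Subgroup.map_commutator, ← MonoidHom.range_eq_map, Subgroup.range_subtype]
    exact hperf

end Assembly

/-- Every chain group `G` has trivial center, and `G'' = G'`. -/
theorem stmt10 (G : Subgroup HomeoR) (hG : ∃ n : ℕ, IsChainGroup n G) :
    Subgroup.center ↥G = ⊥ ∧
      Subgroup.map (commutator ↥G).subtype (commutator ↥(commutator ↥G)) =
        commutator ↥G := by
  obtain ⟨n, f, hf, hGen⟩ := hG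
  subst hGen
  exact stmt10_aux f hf
end

section
/- Let X be a non-compact Hausdorff topological space and let H be a nonabelian subgroup of the group Homeo(X) of self-homeomorphisms of X such that every element h ∈ H is compactly supported, i.e., supp h = {x ∈ X | h x ≠ x} is contained in a compact subset of X. If H acts CO-transitively on X, then the commutator subgroup H′ is simple. -/
open scoped commutatorElement


/-- The group of self-homeomorphisms of a topological space, under composition:
`(f * g) x = f (g x)`. -/
instance homeoGroup {X : Type*} [TopologicalSpace X] : Group (X ≃ₜ X) where
  mul f g := g.trans f
  one := Homeomorph.refl X
  inv := Homeomorph.symm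
  mul_assoc f g h := rfl
  one_mul f := rfl
  mul_one f := rfl
  inv_mul_cancel f := by ext x; exact f.symm_apply_apply x

/-- The support of a self-homeomorphism. -/
def suppX {X : Type*} [TopologicalSpace X] (h : X ≃ₜ X) : Set X := {x : X | h x ≠ x}

section supp
variable {X : Type*} [TopologicalSpace X]

lemma mulX_apply (f g : X ≃ₜ X) (x : X) : (f * g) x = f (g x) := rfl

lemma fix_of_not_mem_supp {f : X ≃ₜ X} {x : X} (h : x ∉ suppX f) : f x = x := not_not.mp h

lemma supp_subset_conj (u f : X ≃ₜ X) : suppX (u * f * u⁻¹) ⊆ (⇑u) '' suppX f := by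
  intro x hx
  have h1 : f (u⁻¹ x) ≠ u⁻¹ x := by
    intro h
    apply hx
    show u (f (u⁻¹ x)) = x
    rw [h]
    exact u.apply_symm_apply x
  exact ⟨u⁻¹ x, h1, u.apply_symm_apply x⟩

lemma suppX_inv (f : X ≃ₜ X) : suppX f⁻¹ = suppX f := by
  ext x
  simp only [suppX, Set.mem_setOf_eq]
  constructor
  · intro h hc
    apply h
    show f.symm x = x
    conv_lhs => rw [← hc]
    exact f.symm_apply_apply x
  · intro h hc
    apply h
    have hc' : f.symm x = x := hc
    conv_lhs => rw [← hc']
    exact f.apply_symm_apply x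

lemma suppX_mul (f g : X ≃ₜ X) : suppX (f * g) ⊆ suppX f ∪ suppX g := by
  intro x hx
  by_cases h : g x = x
  · left
    show f x ≠ x
    intro hf
    apply hx
    show f (g x) = x
    rw [h, hf]
  · right; exact h

lemma supp_mapsto (f : X ≃ₜ X) : ∀ x ∈ suppX f, f x ∈ suppX f := by
  intro x hx hcon
  exact hx (f.injective hcon)

lemma commute_of_disjoint_supp {f g : X ≃ₜ X} {S T : Set X}
    (hf : suppX f ⊆ S) (hg : suppX g ⊆ T) (hST : Disjoint S T) : f * g = g * f := by
  have key : ∀ x, f (g x) = g (f x) := by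
    intro x
    by_cases hxf : x ∈ suppX f
    · have hfx : f x ∈ suppX f := supp_mapsto f x hxf
      have h1 : g x = x := fix_of_not_mem_supp
        (fun h => Set.disjoint_left.mp hST (hf hxf) (hg h))
      have h2 : g (f x) = f x := fix_of_not_mem_supp
        (fun h => Set.disjoint_left.mp hST (hf hfx) (hg h))
      rw [h1, h2]
    · by_cases hxg : x ∈ suppX g
      · have hgx : g x ∈ suppX g := supp_mapsto g x hxg
        have h1 : f x = x := fix_of_not_mem_supp hxf
        have h2 : f (g x) = g x := fix_of_not_mem_supp
          (fun h => Set.disjoint_left.mp hST (hf h) (hg hgx))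
        rw [h1, h2]
      · have h1 : f x = x := fix_of_not_mem_supp hxf
        have h2 : g x = x := fix_of_not_mem_supp hxg
        show f (g x) = g (f x)
        rw [h2, h1, h2]
  exact Homeomorph.ext key

end supp

section helpers
variable {G : Type*} [Group G]

lemma helperA (a q b : G) (h : q * b = b * q) : ⁅a * q, b⁆ = ⁅a, b⁆ := by
  have e1 : ⁅a * q, b⁆ = a * (q * b) * q⁻¹ * a⁻¹ * b⁻¹ := by group
  rw [e1, h]; group

lemma helperB (x b r : G) (h : r * x⁻¹ = x⁻¹ * r) : ⁅x, b * r⁆ = ⁅x, b⁆ := by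
  have e1 : ⁅x, b * r⁆ = x * b * (r * x⁻¹) * r⁻¹ * b⁻¹ := by group
  rw [e1, h]; group

lemma helperC (p a b : G) (h : p * (a * b * a⁻¹) = (a * b * a⁻¹) * p) :
    ⁅p * a, b⁆ = ⁅a, b⁆ := by
  have e1 : ⁅p * a, b⁆ = p * (a * b * a⁻¹) * p⁻¹ * b⁻¹ := by group
  rw [e1, h]
  group

lemma conj_comm_id (u a b : G) :
    ⁅a⁻¹, b⁆ = u⁻¹ * ⁅(u * a * u⁻¹)⁻¹, u * b * u⁻¹⁆ * (u⁻¹)⁻¹ := by group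

lemma comm_mem_helper (c b : G) : ⁅c, b⁆ = c * (b * c⁻¹ * b⁻¹) := by group

lemma comm_split (g a : G) : ⁅g, a⁆ = g * (a * g⁻¹ * a⁻¹) := by group

end helpers

section move
variable {X : Type*} [TopologicalSpace X] [T2Space X] [NoncompactSpace X]

lemma moveC (H : Subgroup (X ≃ₜ X))
    (hcpt : ∀ h ∈ H, ∃ K : Set X, IsCompact K ∧ suppX h ⊆ K)
    (hco : ∀ A : Set X, IsCompact A → A ≠ Set.univ →
      ∀ B : Set X, IsOpen B → B.Nonempty → ∃ u ∈ H, u '' A ⊆ B)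
    (K : Set X) (hK : IsCompact K) (hKne : K ≠ Set.univ)
    (U : Set X) (hU : IsOpen U) (hUne : U.Nonempty) :
    ∃ w : ↥H, w ∈ commutator ↥H ∧ ∀ x ∈ K, ((w : X ≃ₜ X)) x ∈ U := by
  obtain ⟨u, hu, huK⟩ := hco K hK hKne U hU hUne
  obtain ⟨Ku, hKu, hsu⟩ := hcpt u hu
  set C₀ : Set X := K ∪ Ku with hC₀def
  have hC₀ : IsCompact C₀ := hK.union hKu
  have hC₀ne : C₀ ≠ Set.univ := hC₀.ne_univ
  obtain ⟨v, hv, hvC⟩ := hco C₀ hC₀ hC₀ne C₀ᶜ hC₀.isClosed.isOpen_compl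
    (Set.nonempty_compl.mpr hC₀ne)
  refine ⟨⁅(⟨u, hu⟩ : ↥H), (⟨v, hv⟩ : ↥H)⁆, ?_, ?_⟩
  · exact Subgroup.commutator_mem_commutator (Subgroup.mem_top _) (Subgroup.mem_top _)
  · intro x hx
    have hfix : (v * u⁻¹ * v⁻¹) x = x := by
      apply fix_of_not_mem_supp
      intro hmem
      obtain ⟨y, hy, hyx⟩ := supp_subset_conj v u⁻¹ hmem
      rw [suppX_inv] at hy
      have h1 : v y ∈ C₀ᶜ := hvC ⟨y, Or.inr (hsu hy), rfl⟩
      rw [hyx] at h1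
      exact h1 (Or.inl hx)
    have : ((⁅(⟨u, hu⟩ : ↥H), (⟨v, hv⟩ : ↥H)⁆ : ↥H) : X ≃ₜ X) x
        = u ((v * u⁻¹ * v⁻¹) x) := rfl
    rw [this, hfix]
    exact huK ⟨x, hx, rfl⟩

end move

section engine
variable {X : Type*} [TopologicalSpace X] [T2Space X] [NoncompactSpace X]

lemma engine (H : Subgroup (X ≃ₜ X))
    (hcpt : ∀ h ∈ H, ∃ K : Set X, IsCompact K ∧ suppX h ⊆ K)
    (hco : ∀ A : Set X, IsCompact A → A ≠ Set.univ →
      ∀ B : Set X, IsOpen B → B.Nonempty → ∃ u ∈ H, u '' A ⊆ B)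
    (N : Subgroup ↥H)
    (hNconj : ∀ c ∈ commutator ↥H, ∀ n ∈ N, c * n * c⁻¹ ∈ N)
    (g₀ : ↥H) (hg₀N : g₀ ∈ N) (hg₀ : g₀ ≠ 1) :
    ∀ a ∈ commutator ↥H, ∀ b ∈ commutator ↥H, ⁅a, b⁆ ∈ N := by
  -- find a point moved by g₀ and an open set displaced by g₀
  have hx₀ : ∃ x₀ : X, (g₀ : X ≃ₜ X) x₀ ≠ x₀ := by
    by_contra hcon
    push_neg at hcon
    apply hg₀
    have : (g₀ : X ≃ₜ X) = 1 := Homeomorph.ext hcon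
    exact Subtype.ext this
  obtain ⟨x₀, hx₀⟩ := hx₀
  obtain ⟨A, B, hA, hB, hxA, hxB, hAB⟩ := t2_separation hx₀.symm
  -- note: t2_separation on x₀ ≠ g₀ x₀
  set U : Set X := A ∩ (⇑(g₀ : X ≃ₜ X)) ⁻¹' B with hUdef
  have hUopen : IsOpen U := hA.inter (hB.preimage (g₀ : X ≃ₜ X).continuous)
  have hUx₀ : x₀ ∈ U := ⟨hxA, hxB⟩
  have hUdisp : ∀ x ∈ U, (g₀ : X ≃ₜ X) x ∉ U := by
    intro x hx hgx
    exact Set.disjoint_left.mp hAB hgx.1 hx.2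
  have hEU : Disjoint ((⇑(g₀ : X ≃ₜ X)) '' U) U := by
    rw [Set.disjoint_left]
    rintro y ⟨x, hx, rfl⟩
    exact hUdisp x hx
  -- the key claim, with an inverse on `a`
  have key : ∀ a ∈ commutator ↥H, ∀ b ∈ commutator ↥H, ⁅a⁻¹, b⁆ ∈ N := by
    intro a ha b hb
    obtain ⟨Ka, hKa, hsa⟩ := hcpt (a : X ≃ₜ X) a.2
    obtain ⟨Kb, hKb, hsb⟩ := hcpt (b : X ≃ₜ X) b.2
    have hK : IsCompact (Ka ∪ Kb) := hKa.union hKb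
    obtain ⟨u, huC, humap⟩ := moveC H hcpt hco (Ka ∪ Kb) hK hK.ne_univ U hUopen ⟨x₀, hUx₀⟩
    set a₁ : ↥H := u * a * u⁻¹ with ha₁def
    set b₁ : ↥H := u * b * u⁻¹ with hb₁def
    have ha₁C : a₁ ∈ commutator ↥H := mul_mem (mul_mem huC ha) (inv_mem huC)
    have hb₁C : b₁ ∈ commutator ↥H := mul_mem (mul_mem huC hb) (inv_mem huC)
    have himg : (⇑(u : X ≃ₜ X)) '' (Ka ∪ Kb) ⊆ U := by
      rintro y ⟨x, hx, rfl⟩; exact humap x hx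
    have ha₁U : suppX (a₁ : X ≃ₜ X) ⊆ U := by
      have : suppX ((u : X ≃ₜ X) * (a : X ≃ₜ X) * (u : X ≃ₜ X)⁻¹)
          ⊆ (⇑(u : X ≃ₜ X)) '' suppX (a : X ≃ₜ X) := supp_subset_conj _ _
      refine subset_trans ?_ (subset_trans (Set.image_mono (hsa.trans Set.subset_union_left)) himg)
      exact this
    have hb₁U : suppX (b₁ : X ≃ₜ X) ⊆ U := by
      have : suppX ((u : X ≃ₜ X) * (b : X ≃ₜ X) * (u : X ≃ₜ X)⁻¹)
          ⊆ (⇑(u : X ≃ₜ X)) '' suppX (b : X ≃ₜ X) := supp_subset_conj _ _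
      refine subset_trans ?_ (subset_trans (Set.image_mono (hsb.trans Set.subset_union_right)) himg)
      exact this
    set p : ↥H := g₀ * a₁ * g₀⁻¹ with hpdef
    set z : ↥H := a₁⁻¹ * b₁ * (a₁⁻¹)⁻¹ with hzdef
    have hpU : suppX (p : X ≃ₜ X) ⊆ (⇑(g₀ : X ≃ₜ X)) '' U :=
      (supp_subset_conj _ _).trans (Set.image_mono ha₁U)
    have hzU : suppX (z : X ≃ₜ X) ⊆ U := by
      have h1 : suppX ((z : X ≃ₜ X)) ⊆
          suppX ((a₁ : X ≃ₜ X)⁻¹ * (b₁ : X ≃ₜ X)) ∪ suppX ((a₁ : X ≃ₜ X)⁻¹)⁻¹ :=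
        suppX_mul _ _
      refine h1.trans ?_
      apply Set.union_subset
      · exact (suppX_mul _ _).trans (Set.union_subset (by rw [suppX_inv]; exact ha₁U) hb₁U)
      · rw [suppX_inv, suppX_inv]; exact ha₁U
    have hcomm : (p : X ≃ₜ X) * (z : X ≃ₜ X) = (z : X ≃ₜ X) * (p : X ≃ₜ X) :=
      commute_of_disjoint_supp hpU hzU hEU
    have hcommH : p * z = z * p := Subtype.ext hcomm
    -- c := p * a₁⁻¹ = ⁅g₀, a₁⁆ ∈ N
    have hcN : p * a₁⁻¹ ∈ N := by
      have h1 : a₁ * g₀⁻¹ * a₁⁻¹ ∈ N := hNconj a₁ ha₁C g₀⁻¹ (inv_mem hg₀N)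
      have h2 : p * a₁⁻¹ = g₀ * (a₁ * g₀⁻¹ * a₁⁻¹) := by rw [hpdef]; group
      rw [h2]
      exact mul_mem hg₀N h1
    have hcb : ⁅p * a₁⁻¹, b₁⁆ = ⁅a₁⁻¹, b₁⁆ := helperC p a₁⁻¹ b₁ hcommH
    have hcbN : ⁅p * a₁⁻¹, b₁⁆ ∈ N := by
      rw [comm_mem_helper]
      exact mul_mem hcN (hNconj b₁ hb₁C _ (inv_mem hcN))
    have h3 : ⁅a₁⁻¹, b₁⁆ ∈ N := hcb ▸ hcbN
    have h4 : ⁅a⁻¹, b⁆ = u⁻¹ * ⁅a₁⁻¹, b₁⁆ * (u⁻¹)⁻¹ := conj_comm_id u a b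
    rw [h4]
    exact hNconj u⁻¹ (inv_mem huC) _ h3
  intro a ha b hb
  have := key a⁻¹ (inv_mem ha) b hb
  rwa [inv_inv] at this

end engine

section reduce
variable {X : Type*} [TopologicalSpace X] [T2Space X] [NoncompactSpace X]

lemma reduceP (H : Subgroup (X ≃ₜ X))
    (hcpt : ∀ h ∈ H, ∃ K : Set X, IsCompact K ∧ suppX h ⊆ K)
    (hco : ∀ A : Set X, IsCompact A → A ≠ Set.univ →
      ∀ B : Set X, IsOpen B → B.Nonempty → ∃ u ∈ H, u '' A ⊆ B)
    (a b : ↥H) :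
    ∃ x y : ↥H, x ∈ commutator ↥H ∧ y ∈ commutator ↥H ∧ ⁅a, b⁆ = ⁅x, y⁆ := by
  obtain ⟨Ka, hKa, hsa⟩ := hcpt (a : X ≃ₜ X) a.2
  obtain ⟨Kb, hKb, hsb⟩ := hcpt (b : X ≃ₜ X) b.2
  set K : Set X := Ka ∪ Kb with hKdef
  have hK : IsCompact K := hKa.union hKb
  obtain ⟨w, hwC, hwmap⟩ := moveC H hcpt hco K hK hK.ne_univ Kᶜ
    hK.isClosed.isOpen_compl (Set.nonempty_compl.mpr hK.ne_univ)
  have hdisjK : Disjoint ((⇑(w : X ≃ₜ X)) '' K) K := by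
    rw [Set.disjoint_left]
    rintro y ⟨x, hx, rfl⟩
    exact hwmap x hx
  set x : ↥H := a * (w * a⁻¹ * w⁻¹) with hxdef
  have hxC : x ∈ commutator ↥H := by
    have : x = ⁅a, w⁆ := by rw [hxdef]; group
    rw [this]
    exact Subgroup.commutator_mem_commutator (Subgroup.mem_top _) (Subgroup.mem_top _)
  have hsuppq : suppX ((w : X ≃ₜ X) * (a : X ≃ₜ X)⁻¹ * (w : X ≃ₜ X)⁻¹)
      ⊆ (⇑(w : X ≃ₜ X)) '' K := by
    refine (supp_subset_conj _ _).trans (Set.image_mono ?_)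
    rw [suppX_inv]
    exact hsa.trans Set.subset_union_left
  have hqb : (w : X ≃ₜ X) * (a : X ≃ₜ X)⁻¹ * (w : X ≃ₜ X)⁻¹ * (b : X ≃ₜ X)
      = (b : X ≃ₜ X) * ((w : X ≃ₜ X) * (a : X ≃ₜ X)⁻¹ * (w : X ≃ₜ X)⁻¹) :=
    commute_of_disjoint_supp hsuppq (hsb.trans Set.subset_union_right) hdisjK
  have hqbH : (w * a⁻¹ * w⁻¹) * b = b * (w * a⁻¹ * w⁻¹) := Subtype.ext hqb
  have claim1 : ⁅x, b⁆ = ⁅a, b⁆ := helperA a (w * a⁻¹ * w⁻¹) b hqbH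
  -- second step
  have hsuppx : suppX (x : X ≃ₜ X) ⊆ K ∪ (⇑(w : X ≃ₜ X)) '' K := by
    have h1 : suppX (x : X ≃ₜ X)
        ⊆ suppX (a : X ≃ₜ X)
          ∪ suppX ((w : X ≃ₜ X) * (a : X ≃ₜ X)⁻¹ * (w : X ≃ₜ X)⁻¹) := suppX_mul _ _
    exact h1.trans (Set.union_subset
      ((hsa.trans Set.subset_union_left).trans Set.subset_union_left)
      (hsuppq.trans Set.subset_union_right))
  set K' : Set X := K ∪ (⇑(w : X ≃ₜ X)) '' K with hK'def
  have hK' : IsCompact K' := hK.union (hK.image (w : X ≃ₜ X).continuous)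
  obtain ⟨w', hw'C, hw'map⟩ := moveC H hcpt hco K' hK' hK'.ne_univ K'ᶜ
    hK'.isClosed.isOpen_compl (Set.nonempty_compl.mpr hK'.ne_univ)
  have hdisjK' : Disjoint ((⇑(w' : X ≃ₜ X)) '' K') K' := by
    rw [Set.disjoint_left]
    rintro y ⟨t, ht, rfl⟩
    exact hw'map t ht
  set y : ↥H := b * (w' * b⁻¹ * w'⁻¹) with hydef
  have hyC : y ∈ commutator ↥H := by
    have : y = ⁅b, w'⁆ := by rw [hydef]; group
    rw [this]
    exact Subgroup.commutator_mem_commutator (Subgroup.mem_top _) (Subgroup.mem_top _)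
  have hsuppr : suppX ((w' : X ≃ₜ X) * (b : X ≃ₜ X)⁻¹ * (w' : X ≃ₜ X)⁻¹)
      ⊆ (⇑(w' : X ≃ₜ X)) '' K' := by
    refine (supp_subset_conj _ _).trans (Set.image_mono ?_)
    rw [suppX_inv]
    exact (hsb.trans Set.subset_union_right).trans Set.subset_union_left
  have hrx : (w' : X ≃ₜ X) * (b : X ≃ₜ X)⁻¹ * (w' : X ≃ₜ X)⁻¹ * (x : X ≃ₜ X)⁻¹
      = (x : X ≃ₜ X)⁻¹ * ((w' : X ≃ₜ X) * (b : X ≃ₜ X)⁻¹ * (w' : X ≃ₜ X)⁻¹) := by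
    apply commute_of_disjoint_supp hsuppr _ hdisjK'
    rw [suppX_inv]
    exact hsuppx
  have hrxH : (w' * b⁻¹ * w'⁻¹) * x⁻¹ = x⁻¹ * (w' * b⁻¹ * w'⁻¹) := Subtype.ext hrx
  have claim2 : ⁅x, y⁆ = ⁅x, b⁆ := helperB x b (w' * b⁻¹ * w'⁻¹) hrxH
  exact ⟨x, y, hxC, hyC, by rw [claim2, claim1]⟩

end reduce


/-- **Higman's method.** Let `X` be a non-compact Hausdorff space and
`H` a nonabelian group of compactly supported self-homeomorphisms of `X`.  If `H` acts
CO-transitively, then the commutator subgroup `H'` is simple. -/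
theorem stmt14 {X : Type*} [TopologicalSpace X] [T2Space X] [NoncompactSpace X]
    (H : Subgroup (X ≃ₜ X))
    (hna : ∃ g h : ↥H, g * h ≠ h * g)
    (hcpt : ∀ h ∈ H, ∃ K : Set X, IsCompact K ∧ suppX h ⊆ K)
    (hco : ∀ A : Set X, IsCompact A → A ≠ Set.univ →
      ∀ B : Set X, IsOpen B → B.Nonempty → ∃ u ∈ H, u '' A ⊆ B) :
    IsSimpleGroup ↥(commutator ↥H) := by
  set C : Subgroup ↥H := commutator ↥H with hCdef
  have hnontriv : Nontrivial ↥C := by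
    obtain ⟨g, h, hgh⟩ := hna
    have htC : ⁅g, h⁆ ∈ C :=
      Subgroup.commutator_mem_commutator (Subgroup.mem_top _) (Subgroup.mem_top _)
    have htne : ⁅g, h⁆ ≠ 1 := by
      rw [Ne, commutatorElement_eq_one_iff_mul_comm]
      exact hgh
    refine ⟨⟨⟨⁅g, h⁆, htC⟩, 1, ?_⟩⟩
    intro hEq
    exact htne (congrArg Subtype.val hEq)
  refine ⟨fun N hNnorm => ?_⟩
  by_cases hbot : N = ⊥
  · exact Or.inl hbot
  right
  have hex : ∃ n ∈ N, n ≠ 1 := by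
    by_contra hcon
    push_neg at hcon
    exact hbot (Subgroup.eq_bot_iff_forall N |>.mpr hcon)
  obtain ⟨n, hnN, hn1⟩ := hex
  set N' : Subgroup ↥H := N.map C.subtype with hN'def
  have hN'conj : ∀ c ∈ C, ∀ m ∈ N', c * m * c⁻¹ ∈ N' := by
    intro c hc m hm
    obtain ⟨m₀, hm₀, rfl⟩ := hm
    refine ⟨(⟨c, hc⟩ : ↥C) * m₀ * (⟨c, hc⟩ : ↥C)⁻¹, hNnorm.conj_mem m₀ hm₀ _, ?_⟩
    rfl
  have hg₀N : (n : ↥H) ∈ N' := ⟨n, hnN, rfl⟩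
  have hg₀1 : (n : ↥H) ≠ 1 := by
    intro hEq
    apply hn1
    exact Subtype.ext hEq
  have hall : ∀ a ∈ C, ∀ b ∈ C, ⁅a, b⁆ ∈ N' :=
    engine H hcpt hco N' hN'conj (n : ↥H) hg₀N hg₀1
  have hle : C ≤ N' := by
    rw [hCdef, commutator_def, Subgroup.commutator_le]
    intro a _ b _
    obtain ⟨x, y, hxC, hyC, hxy⟩ := reduceP H hcpt hco a b
    rw [hxy]
    exact hall x hxC y hyC
  have hge : N' ≤ C := Subgroup.map_subtype_le N
  have hN'C : N' = C := le_antisymm hge hle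
  have htop : (⊤ : Subgroup ↥C).map C.subtype = C := by
    rw [← MonoidHom.range_eq_map, Subgroup.range_subtype]
  apply Subgroup.map_injective (Subgroup.subtype_injective C)
  rw [htop]
  exact hN'C
end

section
/- Let X be a topological space and let G ≤ Homeo(X) be a subgroup whose action is minimal (every G-orbit is dense in X) and locally CO-transitive. Then G acts CO-transitively on X. -/
/-- A minimal, locally CO-transitive group of self-homeomorphisms
acts CO-transitively. -/
theorem stmt15 {X : Type*} [TopologicalSpace X] (G : Subgroup (X ≃ₜ X))
    (hmin : ∀ x : X, Dense {y : X | ∃ g ∈ G, g x = y})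
    (hloc : ∀ A : Set X, IsCompact A → A ≠ Set.univ →
      ∃ x : X, ∀ B : Set X, IsOpen B → x ∈ B → ∃ u ∈ G, u '' A ⊆ B) :
    ∀ A : Set X, IsCompact A → A ≠ Set.univ →
      ∀ B : Set X, IsOpen B → B.Nonempty → ∃ u ∈ G, u '' A ⊆ B := by
  intro A hA hAne B hB hBne
  obtain ⟨x, hx⟩ := hloc A hA hAne
  obtain ⟨y, ⟨g, hgG, hgx⟩, hyB⟩ := (hmin x).exists_mem_open hB hBne
  obtain ⟨u, huG, hu⟩ := hx (g ⁻¹' B) (hB.preimage g.continuous)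
    (by simpa [hgx] using hyB)
  refine ⟨g * u, G.mul_mem hgG huG, ?_⟩
  rintro z ⟨a, haA, rfl⟩
  have : (g * u) a = g (u a) := rfl
  rw [this]
  exact hu ⟨a, haA, rfl⟩
end

section
/- There exists a family (G_i)_{i ∈ I} of subgroups of Homeo⁺(ℝ) indexed by an uncountable set I such that each G_i is generated by two elements and for all i ≠ j the groups G_i and G_j are not isomorphic. -/
noncomputable section
namespace Stmt16

/-! ### Block homeomorphisms of `[0,1)` -/

inductive B : Type | e | u | v
  deriving DecidableEq

def blk : B → ℝ → ℝ
  | .e => fun t => t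
  | .u => fun t => t ^ 2
  | .v => fun t => 2 * t - t ^ 2

def blkinv : B → ℝ → ℝ
  | .e => fun t => t
  | .u => fun t => Real.sqrt t
  | .v => fun t => 1 - Real.sqrt (1 - t)

lemma blk_mem (i : B) {t : ℝ} (h : t ∈ Set.Ico (0:ℝ) 1) : blk i t ∈ Set.Ico (0:ℝ) 1 := by
  obtain ⟨h0, h1⟩ := h
  cases i <;> simp only [blk, Set.mem_Ico] <;> constructor <;> nlinarith

lemma blk_lt (i : B) {s t : ℝ} (hs : s ∈ Set.Ico (0:ℝ) 1) (ht : t ∈ Set.Ico (0:ℝ) 1)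
    (h : s < t) : blk i s < blk i t := by
  obtain ⟨hs0, hs1⟩ := hs; obtain ⟨ht0, ht1⟩ := ht
  cases i <;> simp only [blk] <;> nlinarith

lemma blkinv_mem (i : B) {t : ℝ} (h : t ∈ Set.Ico (0:ℝ) 1) : blkinv i t ∈ Set.Ico (0:ℝ) 1 := by
  obtain ⟨h0, h1⟩ := h
  cases i
  · exact ⟨h0, h1⟩
  · refine ⟨Real.sqrt_nonneg t, ?_⟩
    have : Real.sqrt t < Real.sqrt 1 := Real.sqrt_lt_sqrt h0 h1
    simpa [blkinv] using this
  · simp only [blkinv]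
    constructor
    · have : Real.sqrt (1 - t) ≤ Real.sqrt 1 := Real.sqrt_le_sqrt (by linarith)
      simp only [Real.sqrt_one] at this
      linarith
    · have : 0 < Real.sqrt (1 - t) := Real.sqrt_pos.2 (by linarith)
      linarith

lemma blk_blkinv (i : B) {t : ℝ} (h : t ∈ Set.Ico (0:ℝ) 1) : blk i (blkinv i t) = t := by
  obtain ⟨h0, h1⟩ := h
  cases i
  · rfl
  · exact Real.sq_sqrt h0
  · simp only [blk, blkinv]
    have : Real.sqrt (1 - t) ^ 2 = 1 - t := Real.sq_sqrt (by linarith)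
    nlinarith [this]

/-! ### Gluing block maps along `ℤ` -/

def glue (c : ℤ → B) : ℝ → ℝ := fun x => ⌊x⌋ + blk (c ⌊x⌋) (Int.fract x)

lemma fract_mem (x : ℝ) : Int.fract x ∈ Set.Ico (0:ℝ) 1 :=
  ⟨Int.fract_nonneg x, Int.fract_lt_one x⟩

lemma glue_sub_floor (c : ℤ → B) (x : ℝ) : glue c x - ⌊x⌋ ∈ Set.Ico (0:ℝ) 1 := by
  have := blk_mem (c ⌊x⌋) (fract_mem x)
  simpa [glue] using this

lemma floor_glue (c : ℤ → B) (x : ℝ) : ⌊glue c x⌋ = ⌊x⌋ := by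
  have h := glue_sub_floor c x
  rw [Int.floor_eq_iff]
  constructor
  · linarith [h.1]
  · push_cast; linarith [h.2]

lemma fract_glue (c : ℤ → B) (x : ℝ) :
    Int.fract (glue c x) = blk (c ⌊x⌋) (Int.fract x) := by
  rw [Int.fract, floor_glue]
  simp [glue]

lemma glue_strictMono (c : ℤ → B) : StrictMono (glue c) := by
  intro x y hxy
  rcases lt_or_eq_of_le (Int.floor_le_floor hxy.le) with hf | hf
  · have h1 := glue_sub_floor c x
    have h2 := glue_sub_floor c y
    have : (⌊x⌋ : ℝ) + 1 ≤ (⌊y⌋ : ℝ) := by exact_mod_cast Int.add_one_le_iff.2 hf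
    have hx : glue c x < ⌊x⌋ + 1 := by linarith [h1.2]
    have hy : (⌊y⌋ : ℝ) ≤ glue c y := by linarith [h2.1]
    linarith
  · have hfr : Int.fract x < Int.fract y := by
      unfold Int.fract; rw [hf]; linarith
    have := blk_lt (c ⌊y⌋) (fract_mem x) (fract_mem y) hfr
    simp only [glue, hf]
    linarith

lemma glue_surjective (c : ℤ → B) : Function.Surjective (glue c) := by
  intro y
  set k := ⌊y⌋ with hk
  set s := blkinv (c k) (Int.fract y) with hs
  have hsmem : s ∈ Set.Ico (0:ℝ) 1 := blkinv_mem _ (fract_mem y)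
  refine ⟨(k : ℝ) + s, ?_⟩
  have hfl : ⌊(k : ℝ) + s⌋ = k := by
    rw [Int.floor_eq_iff]
    constructor
    · linarith [hsmem.1]
    · push_cast; linarith [hsmem.2]
  have hfr : Int.fract ((k : ℝ) + s) = s := by
    rw [Int.fract, hfl]; ring
  rw [glue, hfl, hfr, blk_blkinv _ (fract_mem y)]
  rw [hk]
  exact (add_sub_cancel (⌊y⌋ : ℝ) y ▸ by rw [Int.fract]; ring)

def glueIso (c : ℤ → B) : ℝ ≃o ℝ :=
  StrictMono.orderIsoOfSurjective (glue c) (glue_strictMono c) (glue_surjective c)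

@[simp] lemma glueIso_apply (c : ℤ → B) (x : ℝ) : glueIso c x = glue c x := rfl

end Stmt16

namespace Stmt16

/-! ### The translation and conjugation -/

def Tr : HomeoR := OrderIso.addRight (1 : ℝ)

lemma Tr_pow_apply (m : ℕ) : ∀ x : ℝ, (Tr ^ m) x = x + m := by
  induction m with
  | zero => intro x; simp
  | succ n ih =>
    intro x
    rw [pow_succ]
    have h1 : (Tr ^ n * Tr) x = (Tr ^ n) (Tr x) := rfl
    have hT : Tr x = x + 1 := rfl
    rw [h1, hT, ih (x + 1)]
    push_cast; ring

lemma Tr_pow_mul_glue (c : ℤ → B) (m : ℕ) :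
    Tr ^ m * glueIso c = glueIso (fun k => c (k - m)) * Tr ^ m := by
  ext x
  have h1 : (Tr ^ m * glueIso c) x = (Tr ^ m) (glueIso c x) := rfl
  have h2 : (glueIso (fun k => c (k - m)) * Tr ^ m) x
      = glueIso (fun k => c (k - m)) ((Tr ^ m) x) := rfl
  rw [h1, h2, Tr_pow_apply m, glueIso_apply, glueIso_apply, Tr_pow_apply m]
  show glue c x + (m:ℝ) = glue (fun k => c (k - m)) (x + (m:ℕ))
  have hfl : ⌊x + (m:ℕ)⌋ = ⌊x⌋ + m := by
    rw [show ((m:ℕ):ℝ) = ((m:ℤ):ℝ) by push_cast; ring, Int.floor_add_intCast]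
  have hfr : Int.fract (x + (m:ℕ)) = Int.fract x := by
    rw [show ((m:ℕ):ℝ) = ((m:ℤ):ℝ) by push_cast; ring, Int.fract_add_intCast]
  rw [glue, glue, hfl, hfr, show (⌊x⌋ + (m:ℤ) - (m:ℤ)) = ⌊x⌋ from by ring]
  push_cast; ring

lemma conj_glueIso (c : ℤ → B) (m : ℕ) :
    Tr ^ m * glueIso c * (Tr ^ m)⁻¹ = glueIso (fun k => c (k - m)) := by
  rw [Tr_pow_mul_glue, mul_inv_cancel_right]

/-! ### Commutation criterion -/

lemma glue_glue (c d : ℤ → B) (x : ℝ) :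
    glue c (glue d x) = ⌊x⌋ + blk (c ⌊x⌋) (blk (d ⌊x⌋) (Int.fract x)) := by
  rw [glue, floor_glue, fract_glue]

lemma glueIso_commute {c d : ℤ → B}
    (h : ∀ k, c k = B.e ∨ d k = B.e ∨ c k = d k) :
    Commute (glueIso c) (glueIso d) := by
  have : ∀ x : ℝ, glue c (glue d x) = glue d (glue c x) := by
    intro x
    rw [glue_glue, glue_glue]
    rcases h ⌊x⌋ with hc | hd | hcd
    · rw [hc]; simp [blk]
    · rw [hd]; simp [blk]
    · rw [hcd]
  ext x
  exact this x

end Stmt16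

namespace Stmt16

open scoped commutatorElement

/-! ### The family of homeomorphisms indexed by `Set ℕ` -/

open Classical in
def cS (S : Set ℕ) : ℤ → B := fun k =>
  if k = 0 then B.u else if 0 < k ∧ (k - 1).toNat ∈ S then B.v else B.e

lemma cS_zero (S : Set ℕ) : cS S 0 = B.u := by simp [cS]

lemma cS_succ_mem (S : Set ℕ) {n : ℕ} (h : n ∈ S) : cS S ((n : ℤ) + 1) = B.v := by
  have h0 : ((n : ℤ) + 1) ≠ 0 := by omega
  have h1 : (0:ℤ) < (n : ℤ) + 1 := by omega
  have h2 : (((n : ℤ) + 1) - 1).toNat = n := by omega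
  simp only [cS, if_neg h0]
  have h3 : (0:ℤ) < (n:ℤ)+1 ∧ (((n:ℤ)+1)-1).toNat ∈ S := ⟨h1, by rw [h2]; exact h⟩
  rw [if_pos h3]

lemma cS_neg (S : Set ℕ) {k : ℤ} (hk : k < 0) : cS S k = B.e := by
  have h0 : k ≠ 0 := by omega
  simp only [cS, if_neg h0]
  rw [if_neg]
  rintro ⟨h, -⟩; omega

def A (S : Set ℕ) : HomeoR := glueIso (cS S)

def ρ (S : Set ℕ) : FreeGroup (Fin 2) →* HomeoR :=
  FreeGroup.lift ![A S, Tr]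

def w (m : ℕ) : FreeGroup (Fin 2) :=
  ⁅FreeGroup.of (0 : Fin 2),
    (FreeGroup.of (1 : Fin 2)) ^ m * FreeGroup.of (0 : Fin 2) *
      ((FreeGroup.of (1 : Fin 2)) ^ m)⁻¹⁆

lemma ρ_w (S : Set ℕ) (m : ℕ) :
    ρ S (w m) = ⁅A S, Tr ^ m * A S * (Tr ^ m)⁻¹⁆ := by
  simp only [w, ρ, map_commutatorElement, map_mul, map_inv, map_pow, FreeGroup.lift_apply_of]
  norm_num

/-- Key computation: membership of the test words in the kernel detects `S`. -/
lemma w_mem_ker_iff (S : Set ℕ) (n : ℕ) :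
    w (n + 1) ∈ (ρ S).ker ↔ n ∉ S := by
  set m : ℕ := n + 1 with hm
  rw [MonoidHom.mem_ker, ρ_w, commutatorElement_eq_one_iff_commute]
  rw [show Tr ^ m * A S * (Tr ^ m)⁻¹ = glueIso (fun k => cS S (k - m)) from conj_glueIso _ m]
  constructor
  · -- if they commute then n ∉ S
    intro hcomm hnS
    set x₀ : ℝ := ((m : ℤ) : ℝ) + 1/2 with hx₀
    have hfl : ⌊x₀⌋ = (m : ℤ) := by
      rw [hx₀, add_comm, Int.floor_add_intCast]
      norm_num
    have hfr : Int.fract x₀ = 1/2 := by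
      rw [hx₀, add_comm, Int.fract_add_intCast]
      rw [Int.fract_eq_self.2 (by norm_num)]
    have h1 : (glueIso (cS S) * glueIso (fun k => cS S (k - m))) x₀
        = glue (cS S) (glue (fun k => cS S (k - m)) x₀) := rfl
    have h2 : (glueIso (fun k => cS S (k - m)) * glueIso (cS S)) x₀
        = glue (fun k => cS S (k - m)) (glue (cS S) x₀) := rfl
    have heq : glue (cS S) (glue (fun k => cS S (k - m)) x₀)
        = glue (fun k => cS S (k - m)) (glue (cS S) x₀) := by
      have := hcomm
      unfold Commute SemiconjBy at this
      unfold A at this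
      rw [this] at h1
      rw [← h1, h2]
    rw [glue_glue, glue_glue, hfl, hfr] at heq
    have hc : cS S (m : ℤ) = B.v := by
      have : ((n : ℤ) : ℤ) + 1 = (m : ℤ) := by omega
      rw [← this, cS_succ_mem S hnS]
    have hd : cS S ((m : ℤ) - (m : ℤ)) = B.u := by
      rw [sub_self, cS_zero]
    rw [hc, hd] at heq
    simp only [blk] at heq
    norm_num at heq
  · -- if n ∉ S then they commute
    intro hnS
    unfold A
    apply glueIso_commute
    intro k
    by_cases hk0 : k = 0
    · subst hk0
      right; left
      apply cS_neg
      omega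
    · by_cases hkc : cS S k = B.v
      · -- c k = v : k ≥ 1 and (k-1).toNat ∈ S
        have hkpos : 0 < k ∧ (k - 1).toNat ∈ S := by
          by_contra hcon
          simp only [cS, if_neg hk0, if_neg hcon] at hkc
          exact B.noConfusion hkc
        by_cases hkm : k - (m : ℤ) = 0
        · -- k = m, so (k-1).toNat = n ∈ S, contradiction with hnS
          exfalso
          have : (k - 1).toNat = n := by omega
          rw [this] at hkpos
          exact hnS hkpos.2
        · by_cases hv : cS S (k - (m : ℤ)) = B.v
          · right; right; rw [hkc, hv]
          · right; left
            -- cS of a nonzero integer is v or e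
            rcases lt_or_gt_of_ne hkm with h | h
            · exact cS_neg S h
            · have hp : 0 < k - (m : ℤ) := h
              by_cases hms : (k - (m : ℤ) - 1).toNat ∈ S
              · exfalso; apply hv
                simp only [cS, if_neg hkm, if_pos (And.intro hp hms)]
              · simp only [cS, if_neg hkm]
                rw [if_neg]
                rintro ⟨-, hc2⟩; exact hms hc2
      · -- c k ∈ {e, u}; since k ≠ 0, c k ≠ u, hence c k = e
        left
        simp only [cS, if_neg hk0]
        rw [if_neg]
        intro hcon
        apply hkc
        simp only [cS, if_neg hk0, if_pos hcon]

lemma ker_inj : Function.Injective fun S : Set ℕ => (ρ S).ker := by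
  intro S T h
  ext n
  have hS := w_mem_ker_iff S n
  have hT := w_mem_ker_iff T n
  simp only at h
  rw [h] at hS
  tauto

end Stmt16

namespace Stmt16

instance : Countable (FreeGroup (Fin 2)) := FreeGroup.toWord_injective.countable

def H (S : Set ℕ) : Subgroup HomeoR := (ρ S).range

instance countable_H (S : Set ℕ) : Countable ↥(H S) :=
  (ρ S).rangeRestrict_surjective.countable

lemma H_eq_closure (S : Set ℕ) : H S = Subgroup.closure {A S, Tr} := by
  rw [H, ρ, FreeGroup.range_lift_eq_closure]
  congr 1
  ext z
  constructor
  · rintro ⟨i, rfl⟩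
    fin_cases i
    · left; rfl
    · right; rfl
  · rintro (rfl | rfl)
    · exact ⟨0, rfl⟩
    · exact ⟨1, rfl⟩

instance sd : Setoid (Set ℕ) where
  r S T := Nonempty (↥(H S) ≃* ↥(H T))
  iseqv := ⟨fun _ => ⟨MulEquiv.refl _⟩, fun ⟨e⟩ => ⟨e.symm⟩, fun ⟨e⟩ ⟨f⟩ => ⟨e.trans f⟩⟩

def I : Type := Quotient sd

def ψ {S T : Set ℕ} (e : ↥(ρ S).range ≃* ↥(ρ T).range) : FreeGroup (Fin 2) →* ↥(ρ T).range :=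
  e.toMonoidHom.comp (ρ S).rangeRestrict

lemma ker_ψ {S T : Set ℕ} (e : ↥(ρ S).range ≃* ↥(ρ T).range) : (ψ e).ker = (ρ S).ker := by
  ext x
  simp only [ψ, MonoidHom.mem_ker, MonoidHom.comp_apply, MulEquiv.coe_toMonoidHom]
  rw [map_eq_one_iff e e.injective]
  have h1 : (((ρ S).rangeRestrict x : ↥(ρ S).range) : HomeoR) = (ρ S) x :=
    (ρ S).coe_rangeRestrict x
  constructor
  · intro hx
    rw [← h1, hx]
    rfl
  · intro hx
    apply Subtype.ext
    rw [h1, hx]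
    rfl

lemma not_countable_I : ¬Countable I := by
  intro hI
  have hfib : ∀ i : I, Countable {S : Set ℕ // Quotient.mk sd S = i} := by
    intro i
    have key : ∀ s : {S : Set ℕ // Quotient.mk sd S = i},
        Nonempty (↥(H s.1) ≃* ↥(H (Quotient.out i))) := fun s =>
      Quotient.exact (s.2.trans (Quotient.out_eq i).symm)
    have hinj : Function.Injective (fun s : {S : Set ℕ // Quotient.mk sd S = i} =>
        ((ψ (Classical.choice (key s)) (FreeGroup.of (0 : Fin 2)),
          ψ (Classical.choice (key s)) (FreeGroup.of (1 : Fin 2))) :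
          ↥(H (Quotient.out i)) × ↥(H (Quotient.out i)))) := by
      intro s t hst
      obtain ⟨h0, h1⟩ := Prod.ext_iff.1 hst
      have hψ : ψ (Classical.choice (key s)) = ψ (Classical.choice (key t)) := by
        apply FreeGroup.ext_hom
        intro a
        fin_cases a
        · exact h0
        · exact h1
      apply Subtype.ext
      apply ker_inj
      show (ρ s.1).ker = (ρ t.1).ker
      rw [← ker_ψ (Classical.choice (key s)), hψ, ker_ψ]
    exact hinj.countable
  have hsig : Countable (Σ i : I, {S : Set ℕ // Quotient.mk sd S = i}) := inferInstance
  have hinj2 : Function.Injective (fun S : Set ℕ =>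
      (⟨Quotient.mk sd S, S, rfl⟩ : Σ i : I, {S : Set ℕ // Quotient.mk sd S = i})) := by
    intro S T h
    exact congrArg (fun p : (Σ i : I, {S : Set ℕ // Quotient.mk sd S = i}) => p.2.1) h
  have : Countable (Set ℕ) := hinj2.countable
  obtain ⟨f, hf⟩ := exists_injective_nat (Set ℕ)
  exact Function.cantor_surjective _ (Function.invFun_surjective hf)

end Stmt16


end

/-- There are uncountably many pairwise non-isomorphic two-generated
subgroups of `Homeo⁺(ℝ)`. -/
theorem stmt16 :
    ∃ (I : Type) (G : I → Subgroup HomeoR),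
      ¬Countable I ∧
      (∀ i, ∃ x y : HomeoR, G i = Subgroup.closure {x, y}) ∧
      (∀ i j, i ≠ j → IsEmpty (↥(G i) ≃* ↥(G j))) := by
  refine ⟨Stmt16.I, fun i => Stmt16.H (Quotient.out i), Stmt16.not_countable_I, ?_, ?_⟩
  · intro i
    exact ⟨Stmt16.A (Quotient.out i), Stmt16.Tr, Stmt16.H_eq_closure _⟩
  · intro i j hne
    constructor
    intro e
    apply hne
    rw [← Quotient.out_eq i, ← Quotient.out_eq j]
    exact Quotient.sound ⟨e⟩
end

section
/- Let X be a connected topological space and let G be a subgroup of the group Homeo(X) of self-homeomorphisms of X. Then every G-orbit is dense in X if and only if for every x ∈ X the closure of the orbit G·x = {g x | g ∈ G} has nonempty interior. -/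
/-- For a group `G` of self-homeomorphisms of a connected space `X`,
every `G`-orbit is dense if and only if the closure of every `G`-orbit has nonempty
interior (i.e. every orbit is non-nowhere dense). -/
theorem stmt18 {X : Type*} [TopologicalSpace X] [ConnectedSpace X]
    (G : Subgroup (X ≃ₜ X)) :
    (∀ x : X, Dense {y : X | ∃ g ∈ G, g x = y}) ↔
      (∀ x : X, (interior (closure {y : X | ∃ g ∈ G, g x = y})).Nonempty) := by
  set orb : X → Set X := fun x => {y : X | ∃ g ∈ G, g x = y} with horb
  -- invariance of orbit closures
  have key : ∀ h : X ≃ₜ X, h ∈ G → ∀ z : X, ∀ w ∈ closure (orb z),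
      h w ∈ closure (orb z) := by
    intro h hh z w hw
    have h1 : h '' orb z ⊆ orb z := by
      rintro _ ⟨p, ⟨k, hk, rfl⟩, rfl⟩
      exact ⟨h * k, G.mul_mem hh hk, rfl⟩
    have h2 : h '' closure (orb z) = closure (h '' orb z) := h.image_closure _
    have : h w ∈ closure (h '' orb z) := h2 ▸ ⟨w, hw, rfl⟩
    exact closure_mono h1 this
  constructor
  · intro h x
    rw [(h x).closure_eq, interior_univ]
    exact Set.univ_nonempty
  · intro h x
    rw [dense_iff_closure_eq]
    have hx : x ∈ orb x := ⟨1, G.one_mem, rfl⟩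
    have hopen : IsOpen (closure (orb x)) := by
      rw [isOpen_iff_mem_nhds]
      intro y hy
      have horbsub : closure (orb y) ⊆ closure (orb x) := by
        apply closure_minimal _ isClosed_closure
        rintro _ ⟨g, hg, rfl⟩
        exact key g hg x y hy
      obtain ⟨z, hz⟩ := h y
      have hzc : z ∈ closure (orb y) := interior_subset hz
      obtain ⟨p, hp1, g, hg, rfl⟩ :=
        mem_closure_iff.1 hzc _ isOpen_interior hz
      -- y ∈ g.symm '' interior (closure (orb y)), an open set inside closure (orb y)
      have hU : IsOpen ((g : X ≃ₜ X) ⁻¹' interior (closure (orb y))) :=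
        isOpen_interior.preimage g.continuous
      have hyU : y ∈ (g : X ≃ₜ X) ⁻¹' interior (closure (orb y)) := hp1
      have hUsub : (g : X ≃ₜ X) ⁻¹' interior (closure (orb y)) ⊆ closure (orb x) := by
        intro w hw
        have hw' : (g : X ≃ₜ X) w ∈ closure (orb y) := interior_subset hw
        have := key g⁻¹ (G.inv_mem hg) y _ hw'
        have hww : (g⁻¹ : X ≃ₜ X) ((g : X ≃ₜ X) w) = w := (g : X ≃ₜ X).symm_apply_apply w
        rw [hww] at this
        exact horbsub this
      exact Filter.mem_of_superset (hU.mem_nhds hyU) hUsub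
    have hne : (closure (orb x)).Nonempty := ⟨x, subset_closure hx⟩
    exact IsClopen.eq_univ ⟨isClosed_closure, hopen⟩ hne
end
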